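/- arXiv:2212.00589 — 3 statements merged into one kernel-verified Lean document; each statement's English description precedes it below -/
import Mathlib

section
/- Let (B_t)_{t≥0} be a standard Brownian motion and c > 0. Then sup_{t≥0} (B_t − c t) has the exponential distribution with rate 2c; in particular for every M ≥ 0, P[sup_{t≥0}(B_t − ct) > M] = e^{−2cM}. -/
set_option linter.unusedSectionVars false
set_option maxHeartbeats 1000000

open MeasureTheory ProbabilityTheory Real Set Filter Topology
open scoped NNReal ENNReal

/-- A standard one-dimensional Brownian motion started at `0`: continuous paths,
independent increments, and Gaussian increments `B t − B s ∼ N(0, t − s)`. -/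
structure IsStandardBrownianMotion {Ω : Type*} [MeasurableSpace Ω] (μ : Measure Ω)
    (B : ℝ → Ω → ℝ) : Prop where
  isProb : IsProbabilityMeasure μ
  meas : ∀ t, Measurable (B t)
  init : ∀ᵐ ω ∂μ, B 0 ω = 0
  cont : ∀ᵐ ω ∂μ, Continuous fun t => B t ω
  incr_law : ∀ s t : ℝ, 0 ≤ s → s ≤ t →
    μ.map (fun ω => B t ω - B s ω) = gaussianReal 0 (Real.toNNReal (t - s))
  indep_incr : ∀ (n : ℕ) (t : Fin (n + 1) → ℝ), Monotone t → 0 ≤ t 0 →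
    iIndepFun (m := fun _ : Fin n => (inferInstance : MeasurableSpace ℝ))
      (fun (i : Fin n) ω => B (t i.succ) ω - B (t i.castSucc) ω) μ

namespace SupDriftAux

variable {Ω : Type*} [MeasurableSpace Ω] {μ : Measure Ω} {B : ℝ → Ω → ℝ} {c δ x η : ℝ}



lemma exp_mul_gaussianPDFReal (v : ℝ≥0) (hv : v ≠ 0) (l x : ℝ) :
    Real.exp (l * x) * gaussianPDFReal 0 v x
      = Real.exp (l ^ 2 * v / 2) * gaussianPDFReal (l * v) v x := by
  have hv' : (0:ℝ) < v := by
    have := (show (0:ℝ≥0) ≤ v from zero_le).lt_of_ne (Ne.symm hv)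
    exact_mod_cast this
  simp only [gaussianPDFReal]
  rw [mul_left_comm, mul_left_comm (Real.exp (l ^ 2 * v / 2))]
  congr 1
  rw [← Real.exp_add, ← Real.exp_add]
  congr 1
  field_simp
  ring

lemma lintegral_ofReal_exp_gaussianReal (v : ℝ≥0) (hv : v ≠ 0) (l : ℝ) :
    ∫⁻ y, ENNReal.ofReal (Real.exp (l * y)) ∂(gaussianReal 0 v)
      = ENNReal.ofReal (Real.exp (l ^ 2 * v / 2)) := by
  rw [gaussianReal_of_var_ne_zero _ hv,
    lintegral_withDensity_eq_lintegral_mul _ (measurable_gaussianPDF _ _)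
      (by fun_prop)]
  have hpt : ∀ y : ℝ, (gaussianPDF 0 v * fun y => ENNReal.ofReal (Real.exp (l * y))) y
      = ENNReal.ofReal (Real.exp (l ^ 2 * v / 2)) * gaussianPDF (l * v) v y := by
    intro y
    simp only [Pi.mul_apply, gaussianPDF]
    rw [← ENNReal.ofReal_mul (gaussianPDFReal_nonneg _ _ _), mul_comm (gaussianPDFReal 0 v y),
      exp_mul_gaussianPDFReal v hv l y, ENNReal.ofReal_mul (Real.exp_nonneg _)]
  simp only [hpt]
  rw [lintegral_const_mul _ (measurable_gaussianPDF _ _), lintegral_gaussianPDF_eq_one _ hv,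
    mul_one]

/-- Lintegral of `exp (a + b * Z)` for `Z` with law `N(0, v)`. -/
lemma lintegral_exp_affine {Z : Ω → ℝ} (hZ : Measurable Z) {v : ℝ≥0} (hv : v ≠ 0)
    (hlaw : μ.map Z = gaussianReal 0 v) (a b : ℝ) :
    ∫⁻ ω, ENNReal.ofReal (Real.exp (a + b * Z ω)) ∂μ
      = ENNReal.ofReal (Real.exp (a + b ^ 2 * v / 2)) := by
  have : ∀ ω, ENNReal.ofReal (Real.exp (a + b * Z ω))
      = ENNReal.ofReal (Real.exp a) * ENNReal.ofReal (Real.exp (b * Z ω)) := by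
    intro ω
    rw [← ENNReal.ofReal_mul (Real.exp_nonneg _), ← Real.exp_add]
  simp only [this]
  rw [lintegral_const_mul _ (by fun_prop)]
  have hmap : ∫⁻ ω, ENNReal.ofReal (Real.exp (b * Z ω)) ∂μ
      = ∫⁻ y, ENNReal.ofReal (Real.exp (b * y)) ∂(gaussianReal 0 v) := by
    rw [← hlaw, lintegral_map (by fun_prop) hZ]
  rw [hmap, lintegral_ofReal_exp_gaussianReal v hv, ← ENNReal.ofReal_mul (Real.exp_nonneg _),
    ← Real.exp_add]

/-- Transfer a lintegral of `g ∘ Z` to the law of `Z`. -/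
lemma lintegral_comp_law {Z : Ω → ℝ} (hZ : Measurable Z) {ν : Measure ℝ}
    (hlaw : μ.map Z = ν) {g : ℝ → ℝ≥0∞} (hg : Measurable g) :
    ∫⁻ ω, g (Z ω) ∂μ = ∫⁻ y, g y ∂ν := by
  rw [← hlaw, lintegral_map hg hZ]





/-- Independence of the block of the first `k` grid increments from a later increment. -/
lemma indep_block (hB : IsStandardBrownianMotion μ B) (k : ℕ) {δ T : ℝ} (hδ : 0 < δ)
    (hkT : (k : ℝ) * δ ≤ T) :
    IndepFun (fun ω (i : Fin k) => B (((i : ℕ) + 1 : ℝ) * δ) ω - B (((i : ℕ) : ℝ) * δ) ω)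
      (fun ω => B T ω - B ((k : ℝ) * δ) ω) μ := by
  set t : Fin (k + 2) → ℝ := fun i => if (i : ℕ) ≤ k then ((i : ℕ) : ℝ) * δ else T with ht
  have hmono : Monotone t := by
    intro i j hij
    simp only [ht]
    by_cases hj : (j : ℕ) ≤ k
    · rw [if_pos (le_trans (by exact_mod_cast hij) hj), if_pos hj]
      have : ((i : ℕ) : ℝ) ≤ ((j : ℕ) : ℝ) := by exact_mod_cast hij
      nlinarith
    · rw [if_neg hj]
      by_cases hi : (i : ℕ) ≤ k
      · rw [if_pos hi]
        refine le_trans ?_ hkT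
        have : ((i : ℕ) : ℝ) ≤ (k : ℝ) := by exact_mod_cast hi
        nlinarith
      · rw [if_neg hi]
  have h0 : 0 ≤ t 0 := by simp [ht]
  have hind := hB.indep_incr (k + 1) t hmono h0
  have hmeas : ∀ i : Fin (k + 1), Measurable fun ω => B (t i.succ) ω - B (t i.castSucc) ω :=
    fun i => (hB.meas _).sub (hB.meas _)
  have hdisj : Disjoint (Finset.Iio (Fin.last k)) ({Fin.last k} : Finset (Fin (k + 1))) :=
    Finset.disjoint_singleton_right.mpr (by rw [Finset.mem_Iio]; exact lt_irrefl _)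
  have base := hind.indepFun_finset _ _ hdisj hmeas
  have hL : Measurable fun (u : (Finset.Iio (Fin.last k) : Finset (Fin (k+1))) → ℝ) =>
      fun i : Fin k => u ⟨⟨(i : ℕ), by omega⟩, by
        simp only [Finset.mem_Iio, Fin.lt_def, Fin.val_last]; exact i.2⟩ :=
    measurable_pi_lambda _ fun i => measurable_pi_apply _
  have hR : Measurable fun (u : ({Fin.last k} : Finset (Fin (k+1))) → ℝ) =>
      u ⟨Fin.last k, Finset.mem_singleton_self _⟩ := measurable_pi_apply _
  have comp := base.comp hL hR
  have e1 : (fun ω => (fun i : Fin k =>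
        B (t (⟨(i : ℕ), by omega⟩ : Fin (k+1)).succ) ω
          - B (t (⟨(i : ℕ), by omega⟩ : Fin (k+1)).castSucc) ω))
      = fun ω (i : Fin k) => B (((i : ℕ) + 1 : ℝ) * δ) ω - B (((i : ℕ) : ℝ) * δ) ω := by
    funext ω i
    have h1 : ((⟨(i : ℕ), by omega⟩ : Fin (k+1)).succ : ℕ) = (i : ℕ) + 1 := rfl
    have h2 : ((⟨(i : ℕ), by omega⟩ : Fin (k+1)).castSucc : ℕ) = (i : ℕ) := rfl
    simp only [ht]
    rw [h1, h2] -- may not typecheck directly; adjust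
    rw [if_pos (by omega : (i : ℕ) + 1 ≤ k), if_pos (by omega : (i : ℕ) ≤ k)]
    push_cast
    ring_nf
  have e2 : (fun ω => B (t (Fin.last k).succ) ω - B (t (Fin.last k).castSucc) ω)
      = fun ω => B T ω - B ((k : ℝ) * δ) ω := by
    funext ω
    have h1 : ((Fin.last k).succ : ℕ) = k + 1 := rfl
    have h2 : ((Fin.last k).castSucc : ℕ) = k := rfl
    simp only [ht, h1, h2]
    rw [if_neg (by omega), if_pos (le_refl k)]
  convert comp using 1
  · exact e1.symm
  · exact e2.symm





/-- drifted value at grid point `l` (relative to `B 0`). -/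
def Yg (B : ℝ → Ω → ℝ) (c δ : ℝ) (l : ℕ) (ω : Ω) : ℝ :=
  B ((l : ℝ) * δ) ω - B 0 ω - c * ((l : ℝ) * δ)

/-- first crossing of level `x` at grid index `k`. -/
def Cset (B : ℝ → Ω → ℝ) (c δ x : ℝ) (k : ℕ) : Set Ω :=
  {ω | (∀ l < k, Yg B c δ l ω < x) ∧ x ≤ Yg B c δ k ω}

/-- crossing happens at some index `≤ N`. -/
def Uset (B : ℝ → Ω → ℝ) (c δ x : ℝ) (N : ℕ) : Set Ω :=
  ⋃ k ∈ Finset.range (N + 1), Cset B c δ x k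


lemma measurable_Yg (hm : ∀ t, Measurable (B t)) (l : ℕ) : Measurable (Yg B c δ l) := by
  unfold Yg; fun_prop

lemma measurableSet_Cset (hm : ∀ t, Measurable (B t)) (k : ℕ) :
    MeasurableSet (Cset B c δ x k) := by
  have h1 : MeasurableSet {ω | ∀ l < k, Yg B c δ l ω < x} := by
    have : {ω | ∀ l < k, Yg B c δ l ω < x}
        = ⋂ (l : ℕ), ⋂ (_ : l < k), {ω | Yg B c δ l ω < x} := by ext ω; simp
    rw [this]
    exact MeasurableSet.iInter fun l => MeasurableSet.iInter fun _ =>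
      measurableSet_lt (measurable_Yg hm l) measurable_const
  have h2 : MeasurableSet {ω | x ≤ Yg B c δ k ω} :=
    measurableSet_le measurable_const (measurable_Yg hm k)
  exact h1.inter h2

lemma measurableSet_Uset (hm : ∀ t, Measurable (B t)) (N : ℕ) :
    MeasurableSet (Uset B c δ x N) :=
  MeasurableSet.biUnion (Finset.range (N+1)).countable_toSet
    fun k _ => measurableSet_Cset hm k

lemma mem_Uset_iff (N : ℕ) (ω : Ω) :
    ω ∈ Uset B c δ x N ↔ ∃ k ≤ N, x ≤ Yg B c δ k ω := by
  constructor
  · rintro ⟨s, ⟨k, rfl⟩, hs⟩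
    simp only [Set.mem_iUnion, exists_prop] at hs
    obtain ⟨hk, hmem⟩ := hs
    exact ⟨k, Nat.lt_succ_iff.mp (Finset.mem_range.mp hk), hmem.2⟩
  · rintro ⟨k, hkN, hx⟩
    have hex : ∃ m, x ≤ Yg B c δ m ω := ⟨k, hx⟩
    refine Set.mem_biUnion (Finset.mem_range.mpr ?_) (?_ : ω ∈ Cset B c δ x (Nat.find hex))
    · exact Nat.lt_succ_of_le (le_trans (Nat.find_min' hex hx) hkN)
    · exact ⟨fun l hl => not_le.mp (Nat.find_min hex hl), Nat.find_spec hex⟩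

lemma pairwise_disjoint_Cset (N : ℕ) :
    (↑(Finset.range (N + 1)) : Set ℕ).PairwiseDisjoint (Cset B c δ x) := by
  have key : ∀ j k : ℕ, j < k → Disjoint (Cset B c δ x j) (Cset B c δ x k) := by
    intro j k h
    refine Set.disjoint_left.mpr fun ω hj hk => ?_
    exact absurd hj.2 (not_le.mpr (hk.1 j h))
  intro j _ k _ hjk
  rcases lt_or_gt_of_ne hjk with h | h
  · exact key j k h
  · exact (key k j h).symm

/-- partial sum of a vector of increments. -/
def psum (k l : ℕ) (u : Fin k → ℝ) : ℝ := ∑ i : Fin k, if (i : ℕ) < l then u i else 0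

lemma measurable_psum (k l : ℕ) : Measurable (psum k l) := by
  unfold psum
  refine Finset.measurable_sum _ fun i _ => ?_
  split
  · exact measurable_pi_apply i
  · exact measurable_const

/-- the increments vector read off from the path. -/
def VecB (B : ℝ → Ω → ℝ) (δ : ℝ) (k : ℕ) (ω : Ω) : Fin k → ℝ :=
  fun i => B (((i : ℕ) + 1 : ℝ) * δ) ω - B (((i : ℕ) : ℝ) * δ) ω

lemma psum_VecB (k l : ℕ) (hlk : l ≤ k) (ω : Ω) :
    psum k l (VecB B δ k ω) = B ((l : ℝ) * δ) ω - B 0 ω := by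
  unfold psum VecB
  rw [Fin.sum_univ_eq_sum_range
    (fun i => if i < l then B ((i + 1 : ℝ) * δ) ω - B ((i : ℝ) * δ) ω else 0)]
  rw [← Finset.sum_subset (Finset.range_subset_range.mpr hlk)
    (fun i _ hi => by rw [if_neg (by simpa using hi)])]
  rw [Finset.sum_congr rfl (fun i hi => if_pos (Finset.mem_range.mp hi))]
  have := Finset.sum_range_sub (fun n : ℕ => B ((n : ℝ) * δ) ω) l
  convert this using 2
  · push_cast; ring_nf
  · norm_num

lemma Yg_eq_psum (k l : ℕ) (hlk : l ≤ k) (ω : Ω) :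
    Yg B c δ l ω = psum k l (VecB B δ k ω) - c * ((l : ℝ) * δ) := by
  rw [psum_VecB k l hlk ω]; rfl




open Classical in
/-- the first-crossing exponential value, as a function of the increment vector. -/
noncomputable def crossFun (c δ x : ℝ) (k : ℕ) (u : Fin k → ℝ) : ℝ≥0∞ :=
  if (∀ l < k, psum k l u - c * ((l : ℝ) * δ) < x) ∧ x ≤ psum k k u - c * ((k : ℝ) * δ) then
    ENNReal.ofReal (Real.exp (2 * c * (psum k k u - c * ((k : ℝ) * δ)))) else 0

open Classical in
/-- indicator that the path stays below `x` up to index `j`, as a function of increments. -/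
noncomputable def indFun (c δ x : ℝ) (j : ℕ) (u : Fin j → ℝ) : ℝ≥0∞ :=
  if ∀ l ≤ j, psum j l u - c * ((l : ℝ) * δ) < x then 1 else 0

lemma measurableSet_below (k : ℕ) (P : ℕ → Prop) :
    MeasurableSet {u : Fin k → ℝ | ∀ l, P l → psum k l u - c * ((l : ℝ) * δ) < x} := by
  have : {u : Fin k → ℝ | ∀ l, P l → psum k l u - c * ((l : ℝ) * δ) < x}
      = ⋂ (l : ℕ), ⋂ (_ : P l), {u | psum k l u - c * ((l : ℝ) * δ) < x} := by ext u; simp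
  rw [this]
  exact MeasurableSet.iInter fun l => MeasurableSet.iInter fun _ =>
    measurableSet_lt ((measurable_psum k l).sub measurable_const) measurable_const

lemma measurable_crossFun (k : ℕ) : Measurable (crossFun c δ x k) := by
  unfold crossFun
  refine Measurable.ite (MeasurableSet.inter (measurableSet_below k _) ?_) ?_ measurable_const
  · exact measurableSet_le measurable_const ((measurable_psum k k).sub measurable_const)
  · exact (ENNReal.measurable_ofReal.comp (Real.measurable_exp.comp
      (((measurable_psum k k).sub measurable_const).const_mul _)))

lemma measurable_indFun (j : ℕ) : Measurable (indFun c δ x j) := by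
  unfold indFun
  exact Measurable.ite (measurableSet_below j _) measurable_const measurable_const

open Classical in
lemma crossFun_VecB (k : ℕ) (ω : Ω) :
    crossFun c δ x k (VecB B δ k ω)
      = Set.indicator (Cset B c δ x k)
          (fun ω => ENNReal.ofReal (Real.exp (2 * c * Yg B c δ k ω))) ω := by
  have hYg : ∀ l ≤ k, psum k l (VecB B δ k ω) - c * ((l : ℝ) * δ) = Yg B c δ l ω :=
    fun l hl => (Yg_eq_psum k l hl ω).symm
  unfold crossFun
  rw [Set.indicator_apply]
  by_cases h : ω ∈ Cset B c δ x k
  all_goals skip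
  · rw [if_pos, if_pos h, hYg k le_rfl]
    exact ⟨fun l hl => (hYg l hl.le).symm ▸ h.1 l hl, (hYg k le_rfl).symm ▸ h.2⟩
  · rw [if_neg, if_neg h]
    intro hcond
    exact h ⟨fun l hl => (hYg l hl.le) ▸ hcond.1 l hl, (hYg k le_rfl) ▸ hcond.2⟩

open Classical in
lemma indFun_VecB (j : ℕ) (ω : Ω) :
    indFun c δ x j (VecB B δ j ω)
      = Set.indicator {ω | ∀ l ≤ j, Yg B c δ l ω < x} (fun _ => (1 : ℝ≥0∞)) ω := by
  have hYg : ∀ l ≤ j, psum j l (VecB B δ j ω) - c * ((l : ℝ) * δ) = Yg B c δ l ω :=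
    fun l hl => (Yg_eq_psum j l hl ω).symm
  unfold indFun
  rw [Set.indicator_apply]
  by_cases h : ω ∈ {ω | ∀ l ≤ j, Yg B c δ l ω < x}
  · rw [if_pos, if_pos h]
    exact fun l hl => (hYg l hl).symm ▸ h l hl
  · rw [if_neg, if_neg h]
    intro hcond
    exact h fun l hl => (hYg l hl) ▸ hcond l hl



lemma measurable_VecB (hm : ∀ t, Measurable (B t)) (k : ℕ) :
    Measurable (VecB B δ k) :=
  measurable_pi_lambda _ fun _ => (hm _).sub (hm _)

lemma key_id (hB : IsStandardBrownianMotion μ B) (hc : 0 < c) (hδ : 0 < δ)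
    {k N : ℕ} (hkN : k ≤ N) :
    ∫⁻ ω in Cset B c δ x k, ENNReal.ofReal (Real.exp (2 * c * Yg B c δ N ω)) ∂μ
      = ∫⁻ ω in Cset B c δ x k, ENNReal.ofReal (Real.exp (2 * c * Yg B c δ k ω)) ∂μ := by
  rcases eq_or_lt_of_le hkN with rfl | hlt
  · rfl
  have hm := hB.meas
  have hkN' : (k : ℝ) * δ ≤ (N : ℝ) * δ := by
    have : (k : ℝ) ≤ (N : ℝ) := by exact_mod_cast hkN
    nlinarith
  set R : ℝ := (N : ℝ) * δ - (k : ℝ) * δ with hR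
  have hRpos : 0 < R := by
    have : (k : ℝ) < (N : ℝ) := by exact_mod_cast hlt
    have := hδ; nlinarith
  set Z : Ω → ℝ := fun ω => B ((N : ℝ) * δ) ω - B ((k : ℝ) * δ) ω with hZ
  have hZm : Measurable Z := (hm _).sub (hm _)
  have hv : (Real.toNNReal R) ≠ 0 := by
    simp only [ne_eq, Real.toNNReal_eq_zero, not_le]
    exact hRpos
  have hlaw : μ.map Z = gaussianReal 0 (Real.toNNReal R) := by
    have := hB.incr_law ((k : ℝ) * δ) ((N : ℝ) * δ) (by positivity) hkN'
    simpa [hZ, hR] using this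
  set hfun : ℝ → ℝ≥0∞ := fun z => ENNReal.ofReal (Real.exp (-(2*c*(c*R)) + 2*c*z)) with hhfun
  have hmeas_hfun : Measurable hfun := by
    rw [hhfun]; fun_prop
  have hint : ∫⁻ ω, hfun (Z ω) ∂μ = 1 := by
    have h2 := lintegral_exp_affine (μ := μ) hZm hv hlaw (-(2*c*(c*R))) (2*c)
    have hcoe : ((Real.toNNReal R : ℝ≥0) : ℝ) = R := Real.coe_toNNReal _ hRpos.le
    rw [hcoe] at h2
    rw [hhfun]
    simp only at h2 ⊢
    rw [h2, show -(2*c*(c*R)) + (2*c)^2*R/2 = 0 by ring, Real.exp_zero, ENNReal.ofReal_one]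
  have hindep := (indep_block hB k hδ hkN').comp
    (measurable_crossFun (c := c) (δ := δ) (x := x) k) hmeas_hfun
  have hCm := measurableSet_Cset (c := c) (δ := δ) (x := x) hm k
  rw [← lintegral_indicator hCm, ← lintegral_indicator hCm]
  classical
  have hpt : ∀ ω, Set.indicator (Cset B c δ x k)
        (fun ω => ENNReal.ofReal (Real.exp (2 * c * Yg B c δ N ω))) ω
      = crossFun c δ x k (VecB B δ k ω) * hfun (Z ω) := by
    intro ω
    rw [crossFun_VecB, Set.indicator_apply, Set.indicator_apply]
    by_cases hω : ω ∈ Cset B c δ x k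
    · rw [if_pos hω, if_pos hω, hhfun]
      simp only
      rw [← ENNReal.ofReal_mul (Real.exp_nonneg _), ← Real.exp_add]
      congr 2
      simp only [Yg, hZ, hR]
      ring
    · rw [if_neg hω, if_neg hω, zero_mul]
  calc ∫⁻ ω, Set.indicator (Cset B c δ x k)
        (fun ω => ENNReal.ofReal (Real.exp (2 * c * Yg B c δ N ω))) ω ∂μ
      = ∫⁻ ω, crossFun c δ x k (VecB B δ k ω) * hfun (Z ω) ∂μ := lintegral_congr hpt
    _ = (∫⁻ ω, crossFun c δ x k (VecB B δ k ω) ∂μ) * ∫⁻ ω, hfun (Z ω) ∂μ := by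
        refine lintegral_mul_eq_lintegral_mul_lintegral_of_indepFun
          ((measurable_crossFun k).comp (measurable_VecB hm k)) (hmeas_hfun.comp hZm) ?_
        exact hindep
    _ = ∫⁻ ω, Set.indicator (Cset B c δ x k)
        (fun ω => ENNReal.ofReal (Real.exp (2 * c * Yg B c δ k ω))) ω ∂μ := by
        rw [hint, mul_one]
        exact lintegral_congr fun ω => (crossFun_VecB k ω)

lemma total_one (hB : IsStandardBrownianMotion μ B) (hc : 0 < c) (hδ : 0 < δ)
    {N : ℕ} (hN : 0 < N) :
    ∫⁻ ω, ENNReal.ofReal (Real.exp (2 * c * Yg B c δ N ω)) ∂μ = 1 := by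
  have hm := hB.meas
  have hT : (0:ℝ) < (N : ℝ) * δ := by
    have : (0:ℝ) < (N : ℝ) := by exact_mod_cast hN
    nlinarith
  have hZm : Measurable (fun ω => B ((N : ℝ) * δ) ω - B 0 ω) := (hm _).sub (hm _)
  have hv : (Real.toNNReal ((N : ℝ) * δ - 0)) ≠ 0 := by
    simp only [ne_eq, Real.toNNReal_eq_zero, not_le]
    linarith
  have hlaw := hB.incr_law 0 ((N : ℝ) * δ) le_rfl hT.le
  have h2 := lintegral_exp_affine (μ := μ) hZm hv hlaw (-(2*c*(c*((N : ℝ) * δ)))) (2*c)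
  have hcoe : ((Real.toNNReal ((N : ℝ) * δ - 0) : ℝ≥0) : ℝ) = (N : ℝ) * δ := by
    rw [Real.coe_toNNReal _ (by linarith)]; ring
  rw [hcoe] at h2
  have hpt : ∀ ω, ENNReal.ofReal (Real.exp (2 * c * Yg B c δ N ω))
      = ENNReal.ofReal (Real.exp (-(2*c*(c*((N : ℝ) * δ))) + 2*c*(B ((N : ℝ) * δ) ω - B 0 ω))) := by
    intro ω
    congr 1
    simp only [Yg]
    ring
  rw [lintegral_congr hpt, h2,
    show -(2*c*(c*((N : ℝ) * δ))) + (2*c)^2*((N : ℝ) * δ)/2 = 0 by ring,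
    Real.exp_zero, ENNReal.ofReal_one]

lemma le_exp_neg {m : ℝ≥0∞} {u : ℝ} (h : ENNReal.ofReal (Real.exp u) * m ≤ 1) :
    m ≤ ENNReal.ofReal (Real.exp (-u)) := by
  rw [Real.exp_neg, ENNReal.ofReal_inv_of_pos (Real.exp_pos u)]
  exact ENNReal.le_inv_iff_mul_le.mpr (by rwa [mul_comm] at h)

lemma measurable_expYg (hm : ∀ t, Measurable (B t)) (k : ℕ) :
    Measurable fun ω => ENNReal.ofReal (Real.exp (2 * c * Yg B c δ k ω)) :=
  ENNReal.measurable_ofReal.comp (Real.measurable_exp.comp ((measurable_Yg hm k).const_mul (2*c)))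

lemma upper_mul_le_one (hB : IsStandardBrownianMotion μ B) (hc : 0 < c) (hδ : 0 < δ)
    (hx : 0 ≤ x) {N : ℕ} (hN : 0 < N) :
    ENNReal.ofReal (Real.exp (2 * c * x)) * μ (Uset B c δ x N) ≤ 1 := by
  have hm := hB.meas
  rw [Uset, measure_biUnion_finset (pairwise_disjoint_Cset N)
      (fun k _ => measurableSet_Cset hm k), Finset.mul_sum]
  have step1 : ∀ k ∈ Finset.range (N + 1),
      ENNReal.ofReal (Real.exp (2 * c * x)) * μ (Cset B c δ x k)
        ≤ ∫⁻ ω in Cset B c δ x k, ENNReal.ofReal (Real.exp (2 * c * Yg B c δ N ω)) ∂μ := by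
    intro k hk
    rw [key_id hB hc hδ (Nat.lt_succ_iff.mp (Finset.mem_range.mp hk)), ← setLIntegral_const]
    refine setLIntegral_mono (measurable_expYg hm k) fun ω hω => ?_
    refine ENNReal.ofReal_le_ofReal (Real.exp_le_exp.mpr ?_)
    have := hω.2
    nlinarith
  calc ∑ k ∈ Finset.range (N + 1), ENNReal.ofReal (Real.exp (2 * c * x)) * μ (Cset B c δ x k)
      ≤ ∑ k ∈ Finset.range (N + 1),
          ∫⁻ ω in Cset B c δ x k, ENNReal.ofReal (Real.exp (2 * c * Yg B c δ N ω)) ∂μ :=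
        Finset.sum_le_sum step1
    _ = ∫⁻ ω in ⋃ k ∈ Finset.range (N + 1), Cset B c δ x k,
          ENNReal.ofReal (Real.exp (2 * c * Yg B c δ N ω)) ∂μ :=
        (lintegral_biUnion_finset (pairwise_disjoint_Cset N)
          (fun k _ => measurableSet_Cset hm k) _).symm
    _ ≤ ∫⁻ ω, ENNReal.ofReal (Real.exp (2 * c * Yg B c δ N ω)) ∂μ :=
        setLIntegral_le_lintegral _ _
    _ = 1 := total_one hB hc hδ hN

lemma upper_bound (hB : IsStandardBrownianMotion μ B) (hc : 0 < c) (hδ : 0 < δ)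
    (hx : 0 ≤ x) {N : ℕ} (hN : 0 < N) :
    μ (Uset B c δ x N) ≤ ENNReal.ofReal (Real.exp (-(2 * c * x))) :=
  le_exp_neg (upper_mul_le_one hB hc hδ hx hN)

lemma Dterm_bound (hB : IsStandardBrownianMotion μ B) (hc : 0 < c) (hδ : 0 < δ)
    (hx : 0 < x) {N : ℕ} (hN : 0 < N) (hxc : x ≤ c * ((N : ℝ) * δ)) :
    ∫⁻ ω in (Uset B c δ x N)ᶜ, ENNReal.ofReal (Real.exp (2 * c * Yg B c δ N ω)) ∂μ
      ≤ ENNReal.ofReal (Real.exp (c * x - c ^ 2 * ((N : ℝ) * δ) / 2)) := by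
  classical
  have hm := hB.meas
  set T : ℝ := (N : ℝ) * δ with hTdef
  have hT : 0 < T := by
    have : (0:ℝ) < (N : ℝ) := by exact_mod_cast hN
    rw [hTdef]; nlinarith
  set s : ℝ := c - x / T with hsdef
  have hs : 0 ≤ s := by
    rw [hsdef, sub_nonneg, div_le_iff₀ hT]
    linarith [hxc]
  set Z : Ω → ℝ := fun ω => B T ω - B 0 ω with hZ
  have hZm : Measurable Z := (hm _).sub (hm _)
  have hUm := measurableSet_Uset (c := c) (δ := δ) (x := x) hm N
  rw [← lintegral_indicator hUm.compl]
  have hpt : ∀ ω, Set.indicator (Uset B c δ x N)ᶜ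
        (fun ω => ENNReal.ofReal (Real.exp (2 * c * Yg B c δ N ω))) ω
      ≤ ENNReal.ofReal (Real.exp ((s * x - (2 * c - s) * (c * T)) + (2 * c - s) * Z ω)) := by
    intro ω
    rw [Set.indicator_apply]
    split_ifs with hω
    · have hY : Yg B c δ N ω < x := by
        by_contra hcon
        exact hω ((mem_Uset_iff N ω).mpr ⟨N, le_rfl, not_lt.mp hcon⟩)
      refine ENNReal.ofReal_le_ofReal (Real.exp_le_exp.mpr ?_)
      have hYZ : Yg B c δ N ω = Z ω - c * T := by
        simp only [Yg, hZ, hTdef]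
      nlinarith [mul_nonneg hs (sub_pos.mpr hY).le]
    · exact zero_le
  refine le_trans (lintegral_mono hpt) ?_
  have hv : (Real.toNNReal (T - 0)) ≠ 0 := by
    simp only [ne_eq, Real.toNNReal_eq_zero, not_le]; linarith
  have hlaw := hB.incr_law 0 T le_rfl hT.le
  have h2 := lintegral_exp_affine (μ := μ) hZm hv hlaw (s * x - (2 * c - s) * (c * T)) (2 * c - s)
  have hcoe : ((Real.toNNReal (T - 0) : ℝ≥0) : ℝ) = T := by
    rw [Real.coe_toNNReal _ (by linarith)]; ring
  rw [hcoe] at h2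
  rw [h2]
  refine ENNReal.ofReal_le_ofReal (Real.exp_le_exp.mpr ?_)
  have hkey : s * x - (2 * c - s) * (c * T) + (2 * c - s) ^ 2 * T / 2
      = c * x - c ^ 2 * T / 2 - x ^ 2 / (2 * T) := by
    rw [hsdef]
    field_simp
    ring
  rw [hkey]
  have : 0 ≤ x ^ 2 / (2 * T) := by positivity
  linarith

lemma cross_bound (hB : IsStandardBrownianMotion μ B) (hc : 0 < c) (hδ : 0 < δ)
    (hx : 0 < x) (hη : 0 < η) (hδη : 2 * c * δ ≤ η) (k : ℕ) :
    ∫⁻ ω in Cset B c δ x k, ENNReal.ofReal (Real.exp (2 * c * Yg B c δ k ω)) ∂μ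
      ≤ ENNReal.ofReal (Real.exp (2 * c * (x + η))) * μ (Cset B c δ x k)
        + ENNReal.ofReal (Real.exp (2 * c * (x + η) - η ^ 2 / (2 * δ))) := by
  classical
  haveI := hB.isProb
  have hm := hB.meas
  obtain _ | j := k
  · have hempty : Cset B c δ x 0 = ∅ := by
      ext ω
      simp only [Cset, Set.mem_setOf_eq, Set.mem_empty_iff_false, iff_false, not_and]
      intro _
      have : Yg B c δ 0 ω = 0 := by simp [Yg]
      rw [this]
      exact not_le.mpr hx
    rw [hempty]
    simp only [Measure.restrict_empty, lintegral_zero_measure]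
    exact zero_le
  set k := j + 1 with hk
  set E1 : Set Ω := Cset B c δ x k ∩ {ω | Yg B c δ k ω ≤ x + η} with hE1
  set E2 : Set Ω := Cset B c δ x k ∩ {ω | x + η < Yg B c δ k ω} with hE2
  have hCm := measurableSet_Cset (c := c) (δ := δ) (x := x) hm k
  have hE1m : MeasurableSet E1 := hCm.inter (measurableSet_le (measurable_Yg hm k) measurable_const)
  have hE2m : MeasurableSet E2 := hCm.inter (measurableSet_lt measurable_const (measurable_Yg hm k))
  have hsplit : Cset B c δ x k = E1 ∪ E2 := by
    rw [hE1, hE2, ← Set.inter_union_distrib_left]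
    have : {ω : Ω | Yg B c δ k ω ≤ x + η} ∪ {ω | x + η < Yg B c δ k ω} = Set.univ := by
      ext ω
      simp only [Set.mem_union, Set.mem_setOf_eq, Set.mem_univ, iff_true]
      exact le_or_gt _ _
    rw [this, Set.inter_univ]
  have hdisj : Disjoint E1 E2 := by
    refine Set.disjoint_left.mpr fun ω h1 h2 => ?_
    have hle : Yg B c δ k ω ≤ x + η := h1.2
    have hlt : x + η < Yg B c δ k ω := h2.2
    exact absurd hlt (not_lt.mpr hle)
  rw [hsplit, lintegral_union hE2m hdisj]
  have hpart1 : ∫⁻ ω in E1, ENNReal.ofReal (Real.exp (2 * c * Yg B c δ k ω)) ∂μ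
      ≤ ENNReal.ofReal (Real.exp (2 * c * (x + η))) * μ (E1 ∪ E2) := by
    calc ∫⁻ ω in E1, ENNReal.ofReal (Real.exp (2 * c * Yg B c δ k ω)) ∂μ
        ≤ ∫⁻ _ in E1, ENNReal.ofReal (Real.exp (2 * c * (x + η))) ∂μ := by
          refine setLIntegral_mono measurable_const fun ω hω => ?_
          refine ENNReal.ofReal_le_ofReal (Real.exp_le_exp.mpr ?_)
          have h2 : Yg B c δ k ω ≤ x + η := hω.2
          nlinarith
      _ = ENNReal.ofReal (Real.exp (2 * c * (x + η))) * μ E1 := setLIntegral_const _ _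
      _ ≤ ENNReal.ofReal (Real.exp (2 * c * (x + η))) * μ (E1 ∪ E2) := by
          gcongr
          exact Set.subset_union_left
  refine add_le_add hpart1 ?_
  -- second part : overshoot
  set s : ℝ := η / δ - 2 * c with hsdef
  have hs : 0 ≤ s := by
    rw [hsdef, sub_nonneg, le_div_iff₀ hδ]
    linarith
  set Z : Ω → ℝ := fun ω => B (((j : ℕ) + 1 : ℝ) * δ) ω - B (((j : ℕ) : ℝ) * δ) ω with hZ
  have hZm : Measurable Z := (hm _).sub (hm _)
  set gfun : ℝ → ℝ≥0∞ := fun y => if η < y then ENNReal.ofReal (Real.exp (2 * c * y)) else 0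
    with hgfun
  have hgm : Measurable gfun := by
    rw [hgfun]
    exact Measurable.ite (measurableSet_lt measurable_const measurable_id)
      (by fun_prop) measurable_const
  set φ : (Fin j → ℝ) → ℝ≥0∞ :=
    fun u => ENNReal.ofReal (Real.exp (2 * c * x)) * indFun c δ x j u with hφ
  have hφm : Measurable φ := by
    rw [hφ]; exact (measurable_indFun j).const_mul _
  have hkδ : Yg B c δ k = fun ω => Yg B c δ j ω + (Z ω - c * δ) := by
    funext ω
    simp only [Yg, hZ, hk]
    push_cast
    ring
  have hpt : ∀ ω, Set.indicator E2
        (fun ω => ENNReal.ofReal (Real.exp (2 * c * Yg B c δ k ω))) ω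
      ≤ φ (VecB B δ j ω) * gfun (Z ω) := by
    intro ω
    rw [Set.indicator_apply]
    split_ifs with hω
    · have hbelow : ∀ l ≤ j, Yg B c δ l ω < x := fun l hl =>
        hω.1.1 l (by omega)
      have hYgk : Yg B c δ k ω = Yg B c δ j ω + (Z ω - c * δ) := by rw [hkδ]
      have hZη : η < Z ω := by
        have h2 : x + η < Yg B c δ k ω := hω.2
        have h3 := hbelow j le_rfl
        have hcδ : 0 < c * δ := by positivity
        rw [hYgk] at h2
        linarith
      have hIF : indFun c δ x j (VecB B δ j ω) = 1 := by
        rw [indFun_VecB, Set.indicator_apply,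
          if_pos (show ω ∈ {ω | ∀ l ≤ j, Yg B c δ l ω < x} from hbelow)]
      rw [hφ]
      simp only
      rw [hIF, mul_one, hgfun]
      simp only
      rw [if_pos hZη, ← ENNReal.ofReal_mul (Real.exp_nonneg _), ← Real.exp_add]
      refine ENNReal.ofReal_le_ofReal (Real.exp_le_exp.mpr ?_)
      have h3 := hbelow j le_rfl
      rw [hYgk]
      have hcδ : 0 < c * δ := by positivity
      nlinarith
    · exact zero_le
  have hjT : ((j : ℕ) : ℝ) * δ ≤ ((j : ℕ) + 1 : ℝ) * δ := by nlinarith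
  have hindep := (indep_block hB j hδ hjT).comp hφm hgm
  calc ∫⁻ ω in E2, ENNReal.ofReal (Real.exp (2 * c * Yg B c δ k ω)) ∂μ
      = ∫⁻ ω, Set.indicator E2
          (fun ω => ENNReal.ofReal (Real.exp (2 * c * Yg B c δ k ω))) ω ∂μ :=
        (lintegral_indicator hE2m _).symm
    _ ≤ ∫⁻ ω, φ (VecB B δ j ω) * gfun (Z ω) ∂μ := lintegral_mono hpt
    _ = (∫⁻ ω, φ (VecB B δ j ω) ∂μ) * ∫⁻ ω, gfun (Z ω) ∂μ :=
        lintegral_mul_eq_lintegral_mul_lintegral_of_indepFun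
          (hφm.comp (measurable_VecB hm j)) (hgm.comp hZm) hindep
    _ ≤ ENNReal.ofReal (Real.exp (2 * c * x))
          * ENNReal.ofReal (Real.exp (2 * c * η - η ^ 2 / (2 * δ))) := by
        refine mul_le_mul' ?_ ?_
        · calc ∫⁻ ω, φ (VecB B δ j ω) ∂μ
              ≤ ∫⁻ _, ENNReal.ofReal (Real.exp (2 * c * x)) ∂μ := by
                refine lintegral_mono fun ω => ?_
                rw [hφ]
                simp only
                calc ENNReal.ofReal (Real.exp (2 * c * x)) * indFun c δ x j (VecB B δ j ω)
                    ≤ ENNReal.ofReal (Real.exp (2 * c * x)) * 1 := by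
                      gcongr
                      rw [indFun]
                      split_ifs
                      · exact le_rfl
                      · exact zero_le_one
                  _ = ENNReal.ofReal (Real.exp (2 * c * x)) := mul_one _
            _ = ENNReal.ofReal (Real.exp (2 * c * x)) := by
                rw [lintegral_const, measure_univ, mul_one]
        · -- the Gaussian overshoot factor
          have hptg : ∀ y : ℝ, gfun y ≤ ENNReal.ofReal (Real.exp (-(s * η) + (2 * c + s) * y)) := by
            intro y
            rw [hgfun]
            simp only
            split_ifs with hy
            · refine ENNReal.ofReal_le_ofReal (Real.exp_le_exp.mpr ?_)
              nlinarith [mul_le_mul_of_nonneg_left hy.le hs]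
            · exact zero_le
          have hv : (Real.toNNReal (((j : ℕ) + 1 : ℝ) * δ - ((j : ℕ) : ℝ) * δ)) ≠ 0 := by
            simp only [ne_eq, Real.toNNReal_eq_zero, not_le]
            nlinarith
          have hlaw := hB.incr_law (((j : ℕ) : ℝ) * δ) (((j : ℕ) + 1 : ℝ) * δ)
            (by positivity) hjT
          have h2 := lintegral_exp_affine (μ := μ) hZm hv hlaw (-(s * η)) (2 * c + s)
          have hcoe : ((Real.toNNReal (((j : ℕ) + 1 : ℝ) * δ - ((j : ℕ) : ℝ) * δ) : ℝ≥0) : ℝ)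
              = δ := by
            rw [Real.coe_toNNReal _ (by nlinarith)]; ring
          rw [hcoe] at h2
          calc ∫⁻ ω, gfun (Z ω) ∂μ
              ≤ ∫⁻ ω, ENNReal.ofReal (Real.exp (-(s * η) + (2 * c + s) * Z ω)) ∂μ :=
                lintegral_mono fun ω => hptg (Z ω)
            _ = ENNReal.ofReal (Real.exp (-(s * η) + (2 * c + s) ^ 2 * δ / 2)) := h2
            _ = ENNReal.ofReal (Real.exp (2 * c * η - η ^ 2 / (2 * δ))) := by
                congr 2
                rw [hsdef]
                field_simp
                ring
    _ = ENNReal.ofReal (Real.exp (2 * c * (x + η) - η ^ 2 / (2 * δ))) := by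
        rw [← ENNReal.ofReal_mul (Real.exp_nonneg _), ← Real.exp_add]
        congr 2
        ring

lemma lower_bound (hB : IsStandardBrownianMotion μ B) (hc : 0 < c) (hδ : 0 < δ)
    (hx : 0 < x) (hη : 0 < η) (hδη : 2 * c * δ ≤ η) {N : ℕ} (hN : 0 < N)
    (hxc : x ≤ c * ((N : ℝ) * δ)) :
    (1 : ℝ≥0∞) ≤ ENNReal.ofReal (Real.exp (2 * c * (x + η))) * μ (Uset B c δ x N)
      + (N + 1) * ENNReal.ofReal (Real.exp (2 * c * (x + η) - η ^ 2 / (2 * δ)))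
      + ENNReal.ofReal (Real.exp (c * x - c ^ 2 * ((N : ℝ) * δ) / 2)) := by
  have hm := hB.meas
  have hUm := measurableSet_Uset (c := c) (δ := δ) (x := x) hm N
  have htot := total_one (μ := μ) hB hc hδ hN
  rw [← lintegral_add_compl (fun ω => ENNReal.ofReal (Real.exp (2 * c * Yg B c δ N ω))) hUm]
    at htot
  have hU : ∫⁻ ω in Uset B c δ x N, ENNReal.ofReal (Real.exp (2 * c * Yg B c δ N ω)) ∂μ
      ≤ ENNReal.ofReal (Real.exp (2 * c * (x + η))) * μ (Uset B c δ x N)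
        + (N + 1) * ENNReal.ofReal (Real.exp (2 * c * (x + η) - η ^ 2 / (2 * δ))) := by
    rw [Uset, lintegral_biUnion_finset (pairwise_disjoint_Cset N)
      (fun k _ => measurableSet_Cset hm k)]
    calc ∑ k ∈ Finset.range (N + 1),
          ∫⁻ ω in Cset B c δ x k, ENNReal.ofReal (Real.exp (2 * c * Yg B c δ N ω)) ∂μ
        = ∑ k ∈ Finset.range (N + 1),
          ∫⁻ ω in Cset B c δ x k, ENNReal.ofReal (Real.exp (2 * c * Yg B c δ k ω)) ∂μ :=
          Finset.sum_congr rfl fun k hk =>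
            key_id hB hc hδ (Nat.lt_succ_iff.mp (Finset.mem_range.mp hk))
      _ ≤ ∑ k ∈ Finset.range (N + 1),
          (ENNReal.ofReal (Real.exp (2 * c * (x + η))) * μ (Cset B c δ x k)
            + ENNReal.ofReal (Real.exp (2 * c * (x + η) - η ^ 2 / (2 * δ)))) :=
          Finset.sum_le_sum fun k _ => cross_bound hB hc hδ hx hη hδη k
      _ = ENNReal.ofReal (Real.exp (2 * c * (x + η)))
            * ∑ k ∈ Finset.range (N + 1), μ (Cset B c δ x k)
          + (N + 1) * ENNReal.ofReal (Real.exp (2 * c * (x + η) - η ^ 2 / (2 * δ))) := by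
          rw [Finset.sum_add_distrib, ← Finset.mul_sum, Finset.sum_const, Finset.card_range,
            nsmul_eq_mul]
          norm_num
      _ = ENNReal.ofReal (Real.exp (2 * c * (x + η))) * μ (Uset B c δ x N)
          + (N + 1) * ENNReal.ofReal (Real.exp (2 * c * (x + η) - η ^ 2 / (2 * δ))) := by
          rw [Uset, measure_biUnion_finset (pairwise_disjoint_Cset N)
            (fun k _ => measurableSet_Cset hm k)]
  calc (1 : ℝ≥0∞) = _ := htot.symm
    _ ≤ _ := add_le_add hU (Dterm_bound hB hc hδ hx hN hxc)

/-! ### Dyadic grids and limits -/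

/-- number of grid points at stage `m`. -/
def Nn (m : ℕ) : ℕ := m * 2 ^ m

lemma dpos (m : ℕ) : (0:ℝ) < 1 / 2 ^ m := by positivity

lemma Tval (m : ℕ) : ((Nn m : ℕ) : ℝ) * (1 / 2 ^ m : ℝ) = m := by
  unfold Nn
  push_cast
  field_simp

lemma Cset_zero_empty (hx : 0 < x) : Cset B c δ x 0 = ∅ := by
  ext ω
  simp only [Cset, Set.mem_setOf_eq, Set.mem_empty_iff_false, iff_false, not_and]
  intro _
  have : Yg B c δ 0 ω = 0 := by simp [Yg]
  rw [this]
  exact not_le.mpr hx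

lemma Uset_zero (hx : 0 < x) : Uset B c δ x 0 = ∅ := by
  ext ω
  rw [mem_Uset_iff]
  simp only [Set.mem_empty_iff_false, iff_false, not_exists]
  intro k
  rintro ⟨hk, hxk⟩
  interval_cases k
  have : Yg B c δ 0 ω = 0 := by simp [Yg]
  rw [this] at hxk
  exact absurd hxk (not_le.mpr hx)

lemma Umono : Monotone fun m => Uset B c (1 / 2 ^ m) x (Nn m) := by
  refine monotone_nat_of_le_succ fun m => ?_
  intro ω hω
  rw [mem_Uset_iff] at hω ⊢
  obtain ⟨k, hk, hval⟩ := hω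
  refine ⟨2 * k, ?_, ?_⟩
  · unfold Nn at hk ⊢
    have h2 : 2 ^ (m + 1) = 2 * 2 ^ m := by ring
    rw [h2]
    have hr : (m + 1) * (2 * 2 ^ m) = 2 * (m * 2 ^ m) + 2 * 2 ^ m := by ring
    exact le_trans (Nat.mul_le_mul_left 2 hk) (hr ▸ Nat.le_add_right _ _)
  · have htime : ((2 * k : ℕ) : ℝ) * (1 / 2 ^ (m + 1)) = ((k : ℕ) : ℝ) * (1 / 2 ^ m) := by
      push_cast
      rw [pow_succ]
      field_simp
    have : Yg B c (1 / 2 ^ (m + 1)) (2 * k) ω = Yg B c (1 / 2 ^ m) k ω := by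
      unfold Yg
      rw [htime]
    rwa [this]

/-- the event that the drifted path reaches level `x` at some dyadic time. -/
def Udyad (B : ℝ → Ω → ℝ) (c x : ℝ) : Set Ω := ⋃ m, Uset B c (1 / 2 ^ m) x (Nn m)

lemma exp_neg_le_of_one_le {p : ℝ≥0∞} {u : ℝ} (h : 1 ≤ ENNReal.ofReal (Real.exp u) * p) :
    ENNReal.ofReal (Real.exp (-u)) ≤ p := by
  rw [Real.exp_neg, ENNReal.ofReal_inv_of_pos (Real.exp_pos u)]
  refine (ENNReal.inv_le_iff_le_mul ?_ ?_).mpr h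
  · intro _
    simp only [ne_eq, ENNReal.ofReal_eq_zero, not_le]
    exact Real.exp_pos u
  · intro habs
    exact absurd habs ENNReal.ofReal_ne_top

lemma Udyad_measure_le (hB : IsStandardBrownianMotion μ B) (hc : 0 < c) (hx : 0 < x) :
    μ (Udyad B c x) ≤ ENNReal.ofReal (Real.exp (-(2 * c * x))) := by
  rw [Udyad, Umono.measure_iUnion]
  refine iSup_le fun m => ?_
  rcases Nat.eq_zero_or_pos (Nn m) with h0 | hpos
  · rw [h0, Uset_zero hx]
    simp
  · exact upper_bound hB hc (dpos m) hx.le hpos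

lemma err_tendsto (hc : 0 < c) (hη : 0 < η) (K : ℝ) :
    Filter.Tendsto (fun m : ℕ =>
      (((Nn m : ℕ) : ℝ) + 1) * Real.exp (K - η ^ 2 / (2 * (1 / 2 ^ m)))
        + Real.exp (c * x - c ^ 2 * (((Nn m : ℕ) : ℝ) * (1 / 2 ^ m)) / 2))
      Filter.atTop (𝓝 0) := by
  have hb : (0:ℝ) < η ^ 2 / 2 := by positivity
  set b : ℝ := η ^ 2 / 2 with hbdef
  have hpow : Filter.Tendsto (fun m : ℕ => (2:ℝ) ^ m) Filter.atTop Filter.atTop :=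
    tendsto_pow_atTop_atTop_of_one_lt (by norm_num)
  have hbz : Filter.Tendsto (fun m : ℕ => b * (2:ℝ) ^ m) Filter.atTop Filter.atTop :=
    hpow.const_mul_atTop hb
  have hsq : Filter.Tendsto (fun z : ℝ => z ^ 2 * Real.exp (-z)) Filter.atTop (𝓝 0) :=
    tendsto_pow_mul_exp_neg_atTop_nhds_zero 2
  have h1 : Filter.Tendsto (fun m : ℕ =>
      (b * (2:ℝ) ^ m) ^ 2 * Real.exp (-(b * 2 ^ m))) Filter.atTop (𝓝 0) := hsq.comp hbz
  have h1' : Filter.Tendsto (fun m : ℕ =>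
      (Real.exp K * (2 / b ^ 2)) * ((b * (2:ℝ) ^ m) ^ 2 * Real.exp (-(b * 2 ^ m))))
      Filter.atTop (𝓝 0) := by
    have := h1.const_mul (Real.exp K * (2 / b ^ 2))
    simpa using this
  have hterm1 : Filter.Tendsto (fun m : ℕ =>
      (((Nn m : ℕ) : ℝ) + 1) * Real.exp (K - η ^ 2 / (2 * (1 / 2 ^ m))))
      Filter.atTop (𝓝 0) := by
    refine squeeze_zero (fun m => by positivity) (fun m => ?_) h1'
    have hpow_pos : (0:ℝ) < 2 ^ m := by positivity
    have hexp_arg : K - η ^ 2 / (2 * (1 / 2 ^ m)) = K + -(b * 2 ^ m) := by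
      rw [hbdef]
      field_simp
      ring
    rw [hexp_arg, Real.exp_add]
    have hcount : (((Nn m : ℕ) : ℝ) + 1) ≤ 2 / b ^ 2 * (b * 2 ^ m) ^ 2 := by
      have hm2 : ((m : ℕ) : ℝ) ≤ 2 ^ m := by
        exact_mod_cast (Nat.lt_two_pow_self (n := m)).le
      have h4 : (2:ℝ) / b ^ 2 * (b * 2 ^ m) ^ 2 = 2 * (2 ^ m) ^ 2 := by
        field_simp
      rw [h4]
      unfold Nn
      push_cast
      have h1p : (1:ℝ) ≤ 2 ^ m := by
        exact_mod_cast Nat.one_le_two_pow (n := m)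
      nlinarith [mul_le_mul_of_nonneg_right hm2 hpow_pos.le, h1p,
        mul_le_mul_of_nonneg_left h1p hpow_pos.le]
    calc (((Nn m : ℕ) : ℝ) + 1) * (Real.exp K * Real.exp (-(b * 2 ^ m)))
        ≤ (2 / b ^ 2 * (b * 2 ^ m) ^ 2) * (Real.exp K * Real.exp (-(b * 2 ^ m))) := by
          have hps : 0 < Real.exp K * Real.exp (-(b * 2 ^ m)) := by positivity
          nlinarith [hps]
      _ = Real.exp K * (2 / b ^ 2) * ((b * (2:ℝ) ^ m) ^ 2 * Real.exp (-(b * 2 ^ m))) := by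
          ring
  have hterm2 : Filter.Tendsto (fun m : ℕ =>
      Real.exp (c * x - c ^ 2 * (((Nn m : ℕ) : ℝ) * (1 / 2 ^ m)) / 2))
      Filter.atTop (𝓝 0) := by
    have heq : ∀ m : ℕ, c * x - c ^ 2 * (((Nn m : ℕ) : ℝ) * (1 / 2 ^ m)) / 2
        = c * x + -(c ^ 2 / 2 * (m : ℝ)) := by
      intro m
      rw [Tval]
      ring
    simp only [heq]
    have hinner : Filter.Tendsto (fun m : ℕ => c * x + -(c ^ 2 / 2 * (m : ℝ)))
        Filter.atTop Filter.atBot := by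
      refine Filter.tendsto_atBot_add_const_left _ _ ?_
      refine Filter.tendsto_neg_atBot_iff.mpr ?_
      exact tendsto_natCast_atTop_atTop.const_mul_atTop (by positivity)
    exact Real.tendsto_exp_atBot.comp hinner
  simpa using hterm1.add hterm2

lemma Udyad_lower_eta (hB : IsStandardBrownianMotion μ B) (hc : 0 < c) (hx : 0 < x)
    (hη : 0 < η) :
    ENNReal.ofReal (Real.exp (-(2 * c * (x + η)))) ≤ μ (Udyad B c x) := by
  refine exp_neg_le_of_one_le ?_
  refine ENNReal.le_of_forall_pos_le_add fun ε hε _ => ?_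
  -- eventually-conditions in m
  have hev1 : ∀ᶠ m : ℕ in Filter.atTop, 2 * c * (1 / 2 ^ m) ≤ η := by
    have h0 : Filter.Tendsto (fun m : ℕ => 2 * c * (1 / 2 ^ m)) Filter.atTop (𝓝 0) := by
      have : Filter.Tendsto (fun m : ℕ => (1 / 2 : ℝ) ^ m) Filter.atTop (𝓝 0) :=
        tendsto_pow_atTop_nhds_zero_of_lt_one (by norm_num) (by norm_num)
      have h2 := this.const_mul (2 * c)
      simp only [mul_zero] at h2
      convert h2 using 2 with m
      rw [div_pow, one_pow]
    exact (h0.eventually (gt_mem_nhds hη)).mono fun m hm => hm.le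
  have hev2 : ∀ᶠ m : ℕ in Filter.atTop, 0 < Nn m :=
    Filter.eventually_atTop.mpr ⟨1, fun m hm => by
      unfold Nn; positivity⟩
  have hev3 : ∀ᶠ m : ℕ in Filter.atTop, x ≤ c * (((Nn m : ℕ) : ℝ) * (1 / 2 ^ m)) := by
    have : ∀ᶠ m : ℕ in Filter.atTop, x / c ≤ (m : ℝ) :=
      tendsto_natCast_atTop_atTop.eventually_ge_atTop (x / c)
    refine this.mono fun m hm => ?_
    rw [Tval]
    rw [div_le_iff₀ hc] at hm
    linarith
  have hev4 : ∀ᶠ m : ℕ in Filter.atTop,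
      (((Nn m : ℕ) : ℝ) + 1) * Real.exp (2 * c * (x + η) - η ^ 2 / (2 * (1 / 2 ^ m)))
        + Real.exp (c * x - c ^ 2 * (((Nn m : ℕ) : ℝ) * (1 / 2 ^ m)) / 2) ≤ (ε : ℝ) := by
    have := (err_tendsto (x := x) hc hη (2 * c * (x + η))).eventually
      (gt_mem_nhds (show (0:ℝ) < ε by exact_mod_cast hε))
    exact this.mono fun m hm => hm.le
  obtain ⟨m, ⟨⟨h1, h2⟩, h3⟩, h4⟩ := (((hev1.and hev2).and hev3).and hev4).exists
  have hlow := lower_bound (μ := μ) (x := x) (η := η) hB hc (dpos m) hx hη h1 h2 h3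
  have hUle : μ (Uset B c (1 / 2 ^ m) x (Nn m)) ≤ μ (Udyad B c x) :=
    measure_mono (Set.subset_iUnion (fun m => Uset B c (1 / 2 ^ m) x (Nn m)) m)
  have herr : ((Nn m : ℝ≥0∞) + 1)
        * ENNReal.ofReal (Real.exp (2 * c * (x + η) - η ^ 2 / (2 * (1 / 2 ^ m))))
        + ENNReal.ofReal (Real.exp (c * x - c ^ 2 * (((Nn m : ℕ) : ℝ) * (1 / 2 ^ m)) / 2))
      ≤ (ε : ℝ≥0∞) := by
    have hcast : ((Nn m : ℝ≥0∞) + 1) = ENNReal.ofReal (((Nn m : ℕ) : ℝ) + 1) := by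
      rw [ENNReal.ofReal_add (by positivity) zero_le_one]
      rw [ENNReal.ofReal_natCast, ENNReal.ofReal_one]
    rw [hcast, ← ENNReal.ofReal_mul (by positivity),
      ← ENNReal.ofReal_add (by positivity) (Real.exp_nonneg _)]
    calc ENNReal.ofReal _ ≤ ENNReal.ofReal (ε : ℝ) := ENNReal.ofReal_le_ofReal h4
      _ = (ε : ℝ≥0∞) := ENNReal.ofReal_coe_nnreal
  calc (1 : ℝ≥0∞)
      ≤ ENNReal.ofReal (Real.exp (2 * c * (x + η))) * μ (Uset B c (1 / 2 ^ m) x (Nn m))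
        + (Nn m + 1) * ENNReal.ofReal (Real.exp (2 * c * (x + η) - η ^ 2 / (2 * (1 / 2 ^ m))))
        + ENNReal.ofReal (Real.exp (c * x - c ^ 2 * (((Nn m : ℕ) : ℝ) * (1 / 2 ^ m)) / 2)) :=
        hlow
    _ ≤ ENNReal.ofReal (Real.exp (2 * c * (x + η))) * μ (Udyad B c x)
        + ((Nn m + 1) * ENNReal.ofReal (Real.exp (2 * c * (x + η) - η ^ 2 / (2 * (1 / 2 ^ m))))
          + ENNReal.ofReal (Real.exp (c * x - c ^ 2 * (((Nn m : ℕ) : ℝ) * (1 / 2 ^ m)) / 2)))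
        := by
        rw [add_assoc]
        gcongr
    _ ≤ ENNReal.ofReal (Real.exp (2 * c * (x + η))) * μ (Udyad B c x) + (ε : ℝ≥0∞) := by
        gcongr

lemma Udyad_measure (hB : IsStandardBrownianMotion μ B) (hc : 0 < c) (hx : 0 < x) :
    μ (Udyad B c x) = ENNReal.ofReal (Real.exp (-(2 * c * x))) := by
  refine le_antisymm (Udyad_measure_le hB hc hx) ?_
  have ht : Filter.Tendsto (fun n : ℕ => (1 : ℝ) / ((n : ℝ) + 1)) Filter.atTop (𝓝 0) :=
    tendsto_one_div_add_atTop_nhds_zero_nat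
  have hre : Filter.Tendsto (fun n : ℕ => -(2 * c * (x + 1 / ((n : ℝ) + 1))))
      Filter.atTop (𝓝 (-(2 * c * (x + 0)))) := (((ht.const_add x).const_mul (2 * c)).neg)
  have hexp : Filter.Tendsto (fun n : ℕ => Real.exp (-(2 * c * (x + 1 / ((n : ℝ) + 1)))))
      Filter.atTop (𝓝 (Real.exp (-(2 * c * (x + 0))))) :=
    (Real.continuous_exp.tendsto _).comp hre
  have hofReal : Filter.Tendsto
      (fun n : ℕ => ENNReal.ofReal (Real.exp (-(2 * c * (x + 1 / ((n : ℝ) + 1))))))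
      Filter.atTop (𝓝 (ENNReal.ofReal (Real.exp (-(2 * c * (x + 0)))))) :=
    (ENNReal.continuous_ofReal.tendsto _).comp hexp
  rw [add_zero] at hofReal
  refine le_of_tendsto hofReal (Filter.Eventually.of_forall fun n => ?_)
  exact Udyad_lower_eta hB hc hx (by positivity)

/-! ### From dyadic hitting events to the supremum -/

/-- the supremum of the drifted path over nonnegative rational times. -/
noncomputable def Srat (B : ℝ → Ω → ℝ) (c : ℝ) (ω : Ω) : ℝ :=
  ⨆ q : {q : ℚ // 0 ≤ q}, (B (q : ℝ) ω - c * (q : ℝ))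

/-- the supremum of the drifted path over `[0, ∞)`. -/
noncomputable def SIci (B : ℝ → Ω → ℝ) (c : ℝ) (ω : Ω) : ℝ :=
  ⨆ t : Set.Ici (0 : ℝ), (B t ω - c * t)

lemma measurable_Srat (hm : ∀ t, Measurable (B t)) : Measurable (Srat B c) :=
  Measurable.iSup fun q => (hm _).sub measurable_const

/-- the set where the rational suprema are bounded above. -/
def Wset (B : ℝ → Ω → ℝ) (c : ℝ) : Set Ω :=
  {ω | BddAbove (Set.range fun q : {q : ℚ // 0 ≤ q} => B (q : ℝ) ω - c * (q : ℝ))}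

lemma rat_range_subset_closure {ω : Ω} (hcont : Continuous fun t => B t ω) :
    (Set.range fun t : Set.Ici (0 : ℝ) => B (t : ℝ) ω - c * (t : ℝ))
      ⊆ closure (Set.range fun q : {q : ℚ // 0 ≤ q} => B (q : ℝ) ω - c * (q : ℝ)) := by
  rintro _ ⟨⟨t, ht⟩, rfl⟩
  have hf : Continuous fun s : ℝ => B s ω - c * s :=
    hcont.sub (continuous_const.mul continuous_id)
  have hex : ∀ n : ℕ, ∃ q : ℚ, t < q ∧ (q : ℝ) < t + 1 / ((n : ℝ) + 1) := by
    intro n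
    exact exists_rat_btwn (lt_add_of_pos_right t (by positivity))
  choose qn hq1 hq2 using hex
  have hq0 : ∀ n, 0 ≤ qn n := by
    intro n
    have : (0 : ℝ) ≤ (qn n : ℝ) := le_of_lt (lt_of_le_of_lt ht (hq1 n))
    exact_mod_cast this
  have hqt : Filter.Tendsto (fun n : ℕ => ((qn n : ℝ))) Filter.atTop (𝓝 t) := by
    have hupper : Filter.Tendsto (fun n : ℕ => t + 1 / ((n : ℝ) + 1)) Filter.atTop (𝓝 (t + 0)) :=
      tendsto_const_nhds.add tendsto_one_div_add_atTop_nhds_zero_nat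
    rw [add_zero] at hupper
    refine tendsto_of_tendsto_of_tendsto_of_le_of_le tendsto_const_nhds hupper
      (fun n => (hq1 n).le) (fun n => (hq2 n).le)
  have htend : Filter.Tendsto (fun n : ℕ => B ((qn n : ℝ)) ω - c * (qn n : ℝ))
      Filter.atTop (𝓝 (B t ω - c * t)) := (hf.tendsto t).comp hqt
  exact mem_closure_of_tendsto htend (Filter.Eventually.of_forall fun n =>
    ⟨(⟨qn n, hq0 n⟩ : {q : ℚ // 0 ≤ q}), rfl⟩)

lemma sup_eq_rat_sup {ω : Ω} (hcont : Continuous fun t => B t ω) :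
    SIci B c ω = Srat B c ω := by
  rw [SIci, Srat, ← sSup_range, ← sSup_range]
  set A : Set ℝ := Set.range fun q : {q : ℚ // 0 ≤ q} => B (q : ℝ) ω - c * (q : ℝ) with hA
  set Bs : Set ℝ := Set.range fun t : Set.Ici (0 : ℝ) => B (t : ℝ) ω - c * (t : ℝ) with hBs
  have hAB : A ⊆ Bs := by
    rintro _ ⟨q, rfl⟩
    exact ⟨⟨(q : ℝ), Set.mem_Ici.mpr (by exact_mod_cast q.2)⟩, rfl⟩
  have hBc : Bs ⊆ closure A := rat_range_subset_closure hcont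
  have hA_ne : A.Nonempty := ⟨_, Set.mem_range_self (⟨0, le_rfl⟩ : {q : ℚ // 0 ≤ q})⟩
  by_cases hbdd : BddAbove A
  · have hBb : BddAbove Bs := (hbdd.closure).mono hBc
    refine le_antisymm ?_ (csSup_le_csSup hBb hA_ne hAB)
    refine csSup_le (hA_ne.mono hAB) fun b hb => ?_
    have hub : sSup A ∈ upperBounds (closure A) := by
      rw [upperBounds_closure]
      exact fun a ha => le_csSup hbdd ha
    exact hub (hBc hb)
  · have hBs_not : ¬BddAbove Bs := fun h => hbdd (h.mono hAB)
    rw [Real.sSup_of_not_bddAbove hbdd, Real.sSup_of_not_bddAbove hBs_not]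

lemma exists_rat_of_lt_Srat {ω : Ω} {y : ℝ} (hy : y < Srat B c ω) :
    ∃ q : ℚ, 0 ≤ q ∧ y < B (q : ℝ) ω - c * (q : ℝ) := by
  by_cases hbdd : BddAbove (Set.range fun q : {q : ℚ // 0 ≤ q} => B (q : ℝ) ω - c * (q : ℝ))
  · obtain ⟨i, hi⟩ := exists_lt_of_lt_ciSup hy
    exact ⟨i.1, i.2, hi⟩
  · obtain ⟨v, ⟨i, rfl⟩, hv⟩ := (not_bddAbove_iff.mp hbdd) y
    exact ⟨i.1, i.2, hv⟩

/-- From a rational exceedance, continuity produces a dyadic-grid exceedance. -/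
lemma dyadic_hit {ω : Ω} (hcont : Continuous fun t => B t ω) {y : ℝ} {q : ℚ} (hq : 0 ≤ q)
    (hgt : y < B (q : ℝ) ω - B 0 ω - c * (q : ℝ)) : ω ∈ Udyad B c y := by
  set g : ℝ → ℝ := fun s => B s ω - B 0 ω - c * s with hg
  have hgc : Continuous g :=
    (hcont.sub continuous_const).sub (continuous_const.mul continuous_id)
  have hopen : IsOpen {s : ℝ | y < g s} := isOpen_lt continuous_const hgc
  obtain ⟨r, hr, hball⟩ := Metric.isOpen_iff.mp hopen (q : ℝ) hgt
  obtain ⟨m, hm1, hm2⟩ : ∃ m : ℕ, (1 : ℝ) / 2 ^ m < r ∧ (q : ℝ) + 1 ≤ m := by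
    have e1 : ∀ᶠ m : ℕ in Filter.atTop, (1 : ℝ) / 2 ^ m < r := by
      have h0 : Filter.Tendsto (fun m : ℕ => (1 : ℝ) / 2 ^ m) Filter.atTop (𝓝 0) := by
        have : Filter.Tendsto (fun m : ℕ => (1 / 2 : ℝ) ^ m) Filter.atTop (𝓝 0) :=
          tendsto_pow_atTop_nhds_zero_of_lt_one (by norm_num) (by norm_num)
        convert this using 2 with m
        rw [div_pow, one_pow]
      exact h0.eventually (gt_mem_nhds hr)
    have e2 : ∀ᶠ m : ℕ in Filter.atTop, (q : ℝ) + 1 ≤ m :=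
      tendsto_natCast_atTop_atTop.eventually_ge_atTop _
    exact (e1.and e2).exists
  have hq2m : (0 : ℝ) ≤ (q : ℝ) * 2 ^ m := by positivity
  set k : ℕ := ⌈(q : ℝ) * 2 ^ m⌉₊ with hk
  have hpow : (0 : ℝ) < 2 ^ m := by positivity
  have hk1 : (q : ℝ) ≤ (k : ℝ) * (1 / 2 ^ m) := by
    have h := Nat.le_ceil ((q : ℝ) * 2 ^ m)
    rw [mul_one_div, le_div_iff₀ hpow]
    exact h
  have hk2 : (k : ℝ) * (1 / 2 ^ m) < (q : ℝ) + 1 / 2 ^ m := by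
    have := Nat.ceil_lt_add_one hq2m
    rw [mul_one_div, div_lt_iff₀ hpow]
    calc (k : ℝ) < (q : ℝ) * 2 ^ m + 1 := this
      _ ≤ ((q : ℝ) + 1 / 2 ^ m) * 2 ^ m := by
        rw [add_mul, one_div_mul_cancel hpow.ne']
  have hdist : dist ((k : ℝ) * (1 / 2 ^ m)) (q : ℝ) < r := by
    rw [Real.dist_eq, abs_lt]
    constructor
    · have : (0 : ℝ) < 1 / 2 ^ m := by positivity
      linarith
    · linarith
  have hmem : y < g ((k : ℝ) * (1 / 2 ^ m)) := hball hdist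
  have hkN : k ≤ Nn m := by
    have hδ1 : (1 : ℝ) / 2 ^ m ≤ 1 := by
      rw [div_le_one hpow]
      exact one_le_pow₀ (by norm_num)
    have hreal : (k : ℝ) ≤ (m : ℝ) * 2 ^ m := by
      have h1 : (k : ℝ) * (1 / 2 ^ m) ≤ (m : ℝ) := by
        have := hk2
        linarith
      rw [mul_one_div, div_le_iff₀ hpow] at h1
      exact h1
    have : (k : ℝ) ≤ ((Nn m : ℕ) : ℝ) := by
      unfold Nn
      push_cast
      exact hreal
    exact_mod_cast this
  refine Set.mem_iUnion.mpr ⟨m, (mem_Uset_iff _ _).mpr ⟨k, hkN, ?_⟩⟩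
  have : Yg B c (1 / 2 ^ m) k ω = g ((k : ℝ) * (1 / 2 ^ m)) := rfl
  rw [this]
  exact hmem.le

/-! ### Null sets and the survival function of the supremum -/

lemma bad_null (hB : IsStandardBrownianMotion μ B) :
    μ {ω | ¬(B 0 ω = 0 ∧ Continuous fun t => B t ω)} = 0 :=
  ae_iff.mp (hB.init.and hB.cont)

lemma tendsto_ofReal_exp_shift (c y : ℝ) :
    Filter.Tendsto (fun n : ℕ => ENNReal.ofReal (Real.exp (-(2 * c * (y + 1 / ((n : ℝ) + 1))))))
      Filter.atTop (𝓝 (ENNReal.ofReal (Real.exp (-(2 * c * y))))) := by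
  have ht : Filter.Tendsto (fun n : ℕ => (1 : ℝ) / ((n : ℝ) + 1)) Filter.atTop (𝓝 0) :=
    tendsto_one_div_add_atTop_nhds_zero_nat
  have hre : Filter.Tendsto (fun n : ℕ => -(2 * c * (y + 1 / ((n : ℝ) + 1))))
      Filter.atTop (𝓝 (-(2 * c * (y + 0)))) := (((ht.const_add y).const_mul (2 * c)).neg)
  rw [add_zero] at hre
  exact (ENNReal.continuous_ofReal.tendsto _).comp ((Real.continuous_exp.tendsto _).comp hre)

lemma Wc_null (hB : IsStandardBrownianMotion μ B) (hc : 0 < c) :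
    μ ((Wset B c)ᶜ ∩ {ω | B 0 ω = 0 ∧ Continuous fun t => B t ω}) = 0 := by
  have hsub : ∀ n : ℕ, (Wset B c)ᶜ ∩ {ω | B 0 ω = 0 ∧ Continuous fun t => B t ω}
      ⊆ Udyad B c ((n : ℝ) + 1) := by
    rintro n ω ⟨hW, h0, hcont⟩
    obtain ⟨v, ⟨i, rfl⟩, hv⟩ := (not_bddAbove_iff.mp hW) ((n : ℝ) + 1)
    refine dyadic_hit hcont i.2 ?_
    rw [h0]
    simpa using hv
  have hle : ∀ n : ℕ, μ ((Wset B c)ᶜ ∩ {ω | B 0 ω = 0 ∧ Continuous fun t => B t ω})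
      ≤ ENNReal.ofReal (Real.exp (-(2 * c * ((n : ℝ) + 1)))) := fun n =>
    (measure_mono (hsub n)).trans (Udyad_measure_le hB hc (by positivity))
  have htend : Filter.Tendsto (fun n : ℕ => ENNReal.ofReal (Real.exp (-(2 * c * ((n : ℝ) + 1)))))
      Filter.atTop (𝓝 0) := by
    have hinner : Filter.Tendsto (fun n : ℕ => -(2 * c * ((n : ℝ) + 1))) Filter.atTop
        Filter.atBot := by
      refine Filter.tendsto_neg_atBot_iff.mpr ?_
      have h1 : Filter.Tendsto (fun n : ℕ => (n : ℝ) + 1) Filter.atTop Filter.atTop :=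
        Filter.tendsto_atTop_add_const_right _ _ tendsto_natCast_atTop_atTop
      exact h1.const_mul_atTop (by positivity)
    have h2 := Real.tendsto_exp_atBot.comp hinner
    have h3 := (ENNReal.continuous_ofReal.tendsto _).comp h2
    simpa [Function.comp_def] using h3
  exact le_antisymm (ge_of_tendsto htend (Filter.Eventually.of_forall hle)) zero_le

lemma srat_ge_of_Udyad {ω : Ω} {z : ℝ} (hω : ω ∈ Udyad B c z) (hW : ω ∈ Wset B c)
    (h0 : B 0 ω = 0) : z ≤ Srat B c ω := by
  obtain ⟨m, hm⟩ := Set.mem_iUnion.mp hω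
  obtain ⟨k, hkN, hval⟩ := (mem_Uset_iff _ _).mp hm
  set q : ℚ := (k : ℚ) / 2 ^ m with hqdef
  have hq0 : 0 ≤ q := by positivity
  have hqcast : ((q : ℚ) : ℝ) = (k : ℝ) * (1 / 2 ^ m) := by
    rw [hqdef]
    push_cast
    ring
  have hYg : Yg B c (1 / 2 ^ m) k ω
      = B ((k : ℝ) * (1 / 2 ^ m)) ω - B 0 ω - c * ((k : ℝ) * (1 / 2 ^ m)) := rfl
  have hvalq : z ≤ B ((q : ℚ) : ℝ) ω - c * ((q : ℚ) : ℝ) := by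
    rw [hqcast]
    rw [hYg, h0] at hval
    linarith
  have hle : B ((q : ℚ) : ℝ) ω - c * ((q : ℚ) : ℝ) ≤ Srat B c ω :=
    le_ciSup hW (⟨q, hq0⟩ : {q : ℚ // 0 ≤ q})
  linarith

lemma srat_nonneg {ω : Ω} (hW : ω ∈ Wset B c) (h0 : B 0 ω = 0) : 0 ≤ Srat B c ω := by
  have hle : B (((0 : ℚ) : ℝ)) ω - c * ((0 : ℚ) : ℝ) ≤ Srat B c ω :=
    le_ciSup hW (⟨0, le_rfl⟩ : {q : ℚ // 0 ≤ q})
  rw [Rat.cast_zero, h0] at hle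
  linarith

lemma survival_lower (hB : IsStandardBrownianMotion μ B) (hc : 0 < c) {y z : ℝ} (hz : y < z)
    (hzpos : 0 < z) :
    ENNReal.ofReal (Real.exp (-(2 * c * z))) ≤ μ {ω | y < SIci B c ω} := by
  have hbad := bad_null hB
  have hWc := Wc_null hB hc
  have hsub : Udyad B c z ⊆ {ω | y < SIci B c ω}
      ∪ ({ω | ¬(B 0 ω = 0 ∧ Continuous fun t => B t ω)}
        ∪ ((Wset B c)ᶜ ∩ {ω | B 0 ω = 0 ∧ Continuous fun t => B t ω})) := by
    intro ω hω
    by_cases hg : B 0 ω = 0 ∧ Continuous fun t => B t ω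
    · by_cases hW : ω ∈ Wset B c
      · left
        have hval := srat_ge_of_Udyad hω hW hg.1
        have : y < Srat B c ω := lt_of_lt_of_le hz hval
        rw [Set.mem_setOf_eq, sup_eq_rat_sup hg.2]
        exact this
      · right; right; exact ⟨hW, hg⟩
    · right; left; exact hg
  calc ENNReal.ofReal (Real.exp (-(2 * c * z))) = μ (Udyad B c z) :=
        (Udyad_measure hB hc hzpos).symm
    _ ≤ μ ({ω | y < SIci B c ω}) + (μ {ω | ¬(B 0 ω = 0 ∧ Continuous fun t => B t ω)}
          + μ ((Wset B c)ᶜ ∩ {ω | B 0 ω = 0 ∧ Continuous fun t => B t ω})) :=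
        (measure_mono hsub).trans ((measure_union_le _ _).trans
          (by gcongr; exact measure_union_le _ _))
    _ = μ ({ω | y < SIci B c ω}) := by rw [hbad, hWc, add_zero, add_zero]

lemma survival (hB : IsStandardBrownianMotion μ B) (hc : 0 < c) {y : ℝ} (hy : 0 ≤ y) :
    μ {ω | y < SIci B c ω} = ENNReal.ofReal (Real.exp (-(2 * c * y))) := by
  haveI := hB.isProb
  have hbad := bad_null hB
  refine le_antisymm ?_ ?_
  · rcases eq_or_lt_of_le hy with rfl | hypos
    · calc μ {ω | 0 < SIci B c ω} ≤ 1 := prob_le_one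
        _ = ENNReal.ofReal (Real.exp (-(2 * c * 0))) := by
            norm_num
    · have hsub : {ω | y < SIci B c ω}
          ⊆ {ω | ¬(B 0 ω = 0 ∧ Continuous fun t => B t ω)} ∪ Udyad B c y := by
        intro ω hω
        by_cases hg : B 0 ω = 0 ∧ Continuous fun t => B t ω
        · right
          obtain ⟨h0, hcont⟩ := hg
          rw [Set.mem_setOf_eq, sup_eq_rat_sup hcont] at hω
          obtain ⟨q, hq0, hqv⟩ := exists_rat_of_lt_Srat hω
          refine dyadic_hit hcont hq0 ?_
          rw [h0]
          linarith
        · left; exact hg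
      calc μ {ω | y < SIci B c ω}
          ≤ μ {ω | ¬(B 0 ω = 0 ∧ Continuous fun t => B t ω)} + μ (Udyad B c y) :=
            (measure_mono hsub).trans (measure_union_le _ _)
        _ = μ (Udyad B c y) := by rw [hbad, zero_add]
        _ ≤ ENNReal.ofReal (Real.exp (-(2 * c * y))) := Udyad_measure_le hB hc hypos
  · refine le_of_tendsto (tendsto_ofReal_exp_shift c y)
      (Filter.Eventually.of_forall fun n => ?_)
    exact survival_lower hB hc (lt_add_of_pos_right y (by positivity)) (by positivity)

lemma survival_neg (hB : IsStandardBrownianMotion μ B) (hc : 0 < c) {y : ℝ} (hy : y < 0) :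
    μ {ω | y < SIci B c ω} = 1 := by
  haveI := hB.isProb
  have hbad := bad_null hB
  have hWc := Wc_null hB hc
  refine le_antisymm prob_le_one ?_
  have hsub : (Set.univ : Set Ω) ⊆ {ω | y < SIci B c ω}
      ∪ ({ω | ¬(B 0 ω = 0 ∧ Continuous fun t => B t ω)}
        ∪ ((Wset B c)ᶜ ∩ {ω | B 0 ω = 0 ∧ Continuous fun t => B t ω})) := by
    intro ω _
    by_cases hg : B 0 ω = 0 ∧ Continuous fun t => B t ω
    · by_cases hW : ω ∈ Wset B c
      · left
        have h0 := srat_nonneg hW hg.1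
        rw [Set.mem_setOf_eq, sup_eq_rat_sup hg.2]
        linarith
      · right; right; exact ⟨hW, hg⟩
    · right; left; exact hg
  calc (1 : ℝ≥0∞) = μ Set.univ := measure_univ.symm
    _ ≤ μ ({ω | y < SIci B c ω}) + (μ {ω | ¬(B 0 ω = 0 ∧ Continuous fun t => B t ω)}
          + μ ((Wset B c)ᶜ ∩ {ω | B 0 ω = 0 ∧ Continuous fun t => B t ω})) :=
        (measure_mono hsub).trans ((measure_union_le _ _).trans
          (by gcongr; exact measure_union_le _ _))
    _ = μ ({ω | y < SIci B c ω}) := by rw [hbad, hWc, add_zero, add_zero]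

lemma aemeasurable_SIci (hB : IsStandardBrownianMotion μ B) :
    AEMeasurable (SIci B c) μ := by
  refine ⟨Srat B c, measurable_Srat hB.meas, ?_⟩
  filter_upwards [hB.cont] with ω hcont
  exact sup_eq_rat_sup hcont

lemma expMeasure_Iic (hc2 : 0 < 2 * c) (y : ℝ) :
    expMeasure (2 * c) (Set.Iic y)
      = ENNReal.ofReal (if 0 ≤ y then 1 - Real.exp (-(2 * c * y)) else 0) := by
  rw [expMeasure, gammaMeasure, withDensity_apply _ measurableSet_Iic]
  exact lintegral_exponentialPDF_eq_antiDeriv hc2 y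

lemma map_law (hB : IsStandardBrownianMotion μ B) (hc : 0 < c) :
    μ.map (SIci B c) = expMeasure (2 * c) := by
  haveI := hB.isProb
  have haem := aemeasurable_SIci (μ := μ) (c := c) hB
  haveI hprob : IsProbabilityMeasure (μ.map (SIci B c)) := Measure.isProbabilityMeasure_map haem
  haveI hprob2 : IsProbabilityMeasure (expMeasure (2 * c)) :=
    isProbabilityMeasure_expMeasure (by positivity)
  refine Measure.ext_of_Iic _ _ fun y => ?_
  have hIoi : (μ.map (SIci B c)) (Set.Ioi y) = μ {ω | y < SIci B c ω} := by
    rw [Measure.map_apply_of_aemeasurable haem measurableSet_Ioi]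
    rfl
  have hIic : (μ.map (SIci B c)) (Set.Iic y) = 1 - μ {ω | y < SIci B c ω} := by
    rw [← hIoi, ← Set.compl_Ioi, measure_compl measurableSet_Ioi (measure_ne_top _ _),
      measure_univ]
  rw [hIic, expMeasure_Iic (by positivity)]
  rcases le_or_gt 0 y with hy | hy
  · rw [survival hB hc hy, if_pos hy]
    rw [ENNReal.ofReal_sub _ (Real.exp_nonneg _), ENNReal.ofReal_one]
  · rw [survival_neg hB hc hy, if_neg (not_le.mpr hy)]
    simp

end SupDriftAux

open SupDriftAux in
/-- For a standard Brownian motion `B` and `c > 0`, the supremum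
`sup_{t ≥ 0} (B_t − c t)` has the exponential distribution with rate `2c`: its law is
`expMeasure (2c)`, and in particular `P[sup_{t≥0}(B_t − ct) > M] = e^{−2cM}` for `M ≥ 0`. -/
theorem sup_drifted_brownian_exponential {Ω : Type*} [MeasurableSpace Ω]
    (μ : Measure Ω) (B : ℝ → Ω → ℝ) (hB : IsStandardBrownianMotion μ B)
    (c : ℝ) (hc : 0 < c) :
    μ.map (fun ω => ⨆ t : Set.Ici (0 : ℝ), (B t ω - c * t)) = expMeasure (2 * c) ∧
    ∀ M : ℝ, 0 ≤ M →
      μ {ω | (⨆ t : Set.Ici (0 : ℝ), (B t ω - c * t)) > M} =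
        ENNReal.ofReal (Real.exp (-(2 * c * M))) := by
  constructor
  · exact map_law hB hc
  · intro M hM
    exact survival hB hc hM
end

section
/- Length of an admissible path decomposes over excursions: let (S, d) be a metric space, A ⊆ S a closed subset, and P: [a,b] → S a continuous path such that P^{−1}(A) is countable. Define the length L(P) = sup{ ∑_{i=1}^n d(P(t_{i−1}), P(t_i)) : a ≤ t_0 < ... < t_n ≤ b, P(t_i) ∉ A }. Write the open set P^{−1}(S∖A) as a countable union of disjoint intervals I (open in [a,b]). Then L(P) = ∑_I L(P|_{cl(I)}), where each restriction P|_{cl(I)} is also admissible. -/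
open Set ENNReal

/-- The length of (the restriction to `[s,t]` of) a path `P` computed using only
subdivision points lying outside `A`:
`L(P) = sup { ∑ᵢ d(P(t_{i−1}), P(t_i)) : s ≤ t₀ < ⋯ < t_n ≤ t, P(tᵢ) ∉ A }`. -/
noncomputable def admissibleLength {S : Type*} [MetricSpace S] (A : Set S) (P : ℝ → S)
    (s t : ℝ) : ℝ≥0∞ :=
  sSup { r : ℝ≥0∞ | ∃ (n : ℕ) (u : Fin (n + 1) → ℝ), Monotone u ∧
    (∀ j, u j ∈ Set.Icc s t) ∧ (∀ j, P (u j) ∉ A) ∧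
    r = ∑ j : Fin n, ENNReal.ofReal (dist (P (u j.castSucc)) (P (u j.succ))) }


open Filter Topology

lemma admissibleLength_eq {S : Type*} [MetricSpace S] (A : Set S) (P : ℝ → S) (s t : ℝ) :
    admissibleLength A P s t = eVariationOn P (Set.Icc s t ∩ {x | P x ∉ A}) := by
  apply le_antisymm
  · apply sSup_le
    rintro r ⟨n, u, hu, hmem, hA, rfl⟩
    set v : ℕ → ℝ := fun k => u ⟨min k n, by omega⟩ with hv
    have hvmono : Monotone v := fun k l hkl => hu (by simp [Fin.mk_le_mk]; omega)
    have hvs : ∀ k, v k ∈ Set.Icc s t ∩ {x | P x ∉ A} := fun k => ⟨hmem _, hA _⟩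
    refine le_trans (le_of_eq ?_) (eVariationOn.sum_le (f := P) (n := n) hvmono hvs)
    rw [← Fin.sum_univ_eq_sum_range (fun i => edist (P (v (i + 1))) (P (v i))) n]
    refine Finset.sum_congr rfl fun j _ => ?_
    have h1 : v (j : ℕ) = u j.castSucc :=
      congrArg u (Fin.ext (by simp [Nat.min_eq_left j.isLt.le]))
    have h2 : v ((j : ℕ) + 1) = u j.succ :=
      congrArg u (Fin.ext (by simp [Nat.min_eq_left j.isLt]))
    rw [h1, h2, edist_dist, dist_comm]
  · unfold eVariationOn
    apply iSup_le
    rintro ⟨m, u, hu, hus⟩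
    apply le_sSup
    refine ⟨m, fun j => u (j : ℕ), fun j k hjk => hu hjk, fun j => (hus (j : ℕ)).1,
      fun j => (hus (j : ℕ)).2, ?_⟩
    rw [← Fin.sum_univ_eq_sum_range (fun i => edist (P (u (i + 1))) (P (u i))) m]
    refine Finset.sum_congr rfl fun j _ => ?_
    rw [edist_dist, dist_comm]
    simp [Fin.coe_castSucc, Fin.val_succ]


lemma ordConnected_disjoint_total {s t : Set ℝ} (hs : s.OrdConnected) (ht : t.OrdConnected)
    (hd : Disjoint s t) (hsne : s.Nonempty) (htne : t.Nonempty) :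
    (∀ x ∈ s, ∀ y ∈ t, x ≤ y) ∨ (∀ x ∈ t, ∀ y ∈ s, x ≤ y) := by
  obtain ⟨x0, hx0⟩ := hsne
  obtain ⟨y0, hy0⟩ := htne
  rcases le_total x0 y0 with h | h
  · left; intro x hx y hy
    by_contra hlt; push_neg at hlt
    rcases le_total x y0 with h2 | h2
    · exact Set.disjoint_left.mp hd hx (ht.out hy hy0 ⟨hlt.le, h2⟩)
    · exact Set.disjoint_left.mp hd (hs.out hx0 hx ⟨h, h2⟩) hy0
  · right; intro y hy x hx
    by_contra hlt; push_neg at hlt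
    rcases le_total y x0 with h2 | h2
    · exact Set.disjoint_left.mp hd (hs.out hx hx0 ⟨hlt.le, h2⟩) hy
    · exact Set.disjoint_left.mp hd hx0 (ht.out hy0 hy ⟨h, h2⟩)

lemma exists_rightmost {ι : Type*} {I : ι → Set ℝ} (hne : ∀ i, (I i).Nonempty)
    (htot : ∀ i j, i ≠ j → (∀ x ∈ I i, ∀ y ∈ I j, x ≤ y) ∨ (∀ x ∈ I j, ∀ y ∈ I i, x ≤ y))
    (F : Finset ι) (hF : F.Nonempty) :
    ∃ i ∈ F, ∀ j ∈ F, j ≠ i → ∀ x ∈ I j, ∀ y ∈ I i, x ≤ y := by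
  classical
  induction F using Finset.induction_on with
  | empty => simp at hF
  | @insert k F' hk IH =>
    rcases F'.eq_empty_or_nonempty with rfl | hF'
    · refine ⟨k, Finset.mem_insert_self _ _, ?_⟩
      intro j hj hjk
      simp only [LawfulSingleton.insert_empty_eq, Finset.mem_singleton] at hj
      exact absurd hj hjk
    · obtain ⟨i, hiF, hmax⟩ := IH hF'
      have hki : k ≠ i := fun h => hk (h ▸ hiF)
      rcases htot k i hki with hk_le | hi_le
      · refine ⟨i, Finset.mem_insert_of_mem hiF, ?_⟩
        intro j hj hji
        rcases Finset.mem_insert.mp hj with rfl | hj'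
        · exact hk_le
        · exact hmax j hj' hji
      · refine ⟨k, Finset.mem_insert_self _ _, ?_⟩
        intro j hj hjk x hx y hy
        rcases Finset.mem_insert.mp hj with rfl | hj'
        · exact absurd rfl hjk
        · by_cases hji : j = i
          · exact hi_le x (hji ▸ hx) y hy
          · obtain ⟨z, hz⟩ := hne i
            exact le_trans (hmax j hj' hji x hx z hz) (hi_le z hz y hy)

lemma sum_eVar_le {S : Type*} [MetricSpace S] (P : ℝ → S) {ι : Type*} {I : ι → Set ℝ}
    (hne : ∀ i, (I i).Nonempty)
    (htot : ∀ i j, i ≠ j → (∀ x ∈ I i, ∀ y ∈ I j, x ≤ y) ∨ (∀ x ∈ I j, ∀ y ∈ I i, x ≤ y))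
    (F : Finset ι) : ∑ i ∈ F, eVariationOn P (I i) ≤ eVariationOn P (⋃ i ∈ F, I i) := by
  classical
  induction F using Finset.strongInduction with
  | _ F IH =>
    rcases F.eq_empty_or_nonempty with rfl | hF
    · simp
    · obtain ⟨i, hiF, hmax⟩ := exists_rightmost hne htot F hF
      have IH' := IH (F.erase i) (Finset.erase_ssubset hiF)
      rw [← Finset.sum_erase_add F _ hiF]
      calc ∑ x ∈ F.erase i, eVariationOn P (I x) + eVariationOn P (I i)
          ≤ eVariationOn P (⋃ j ∈ F.erase i, I j) + eVariationOn P (I i) :=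
            add_le_add_left IH' _
        _ ≤ eVariationOn P ((⋃ j ∈ F.erase i, I j) ∪ I i) := by
            apply eVariationOn.add_le_union
            rintro x hx y hy
            simp only [Set.mem_iUnion, exists_prop] at hx
            obtain ⟨j, hjF, hxj⟩ := hx
            exact hmax j (Finset.mem_of_mem_erase hjF) (Finset.ne_of_mem_erase hjF) x hxj y hy
        _ ≤ eVariationOn P (⋃ j ∈ F, I j) := by
            apply eVariationOn.mono
            refine Set.union_subset ?_ ?_
            · exact Set.iUnion₂_subset fun j hj => Set.subset_iUnion₂ (s := fun j (_ : j ∈ F) => I j) j (Finset.mem_of_mem_erase hj)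
            · exact Set.subset_iUnion₂ (s := fun j (_ : j ∈ F) => I j) i hiF

lemma sum_icc_eVar_le {S : Type*} [MetricSpace S] (P : ℝ → S) (s : Set ℝ) (u : ℕ → ℝ)
    (hu : Monotone u) (n : ℕ) :
    ∑ k ∈ Finset.range n, eVariationOn P (s ∩ Set.Icc (u k) (u (k + 1)))
      ≤ eVariationOn P (s ∩ Set.Icc (u 0) (u n)) := by
  induction n with
  | zero => simp
  | succ n IH =>
    rw [Finset.sum_range_succ]
    calc _ ≤ eVariationOn P (s ∩ Set.Icc (u 0) (u n))
              + eVariationOn P (s ∩ Set.Icc (u n) (u (n + 1))) := add_le_add_left IH _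
      _ ≤ eVariationOn P ((s ∩ Set.Icc (u 0) (u n)) ∪ (s ∩ Set.Icc (u n) (u (n + 1)))) := by
            apply eVariationOn.add_le_union
            exact fun x hx y hy => hx.2.2.trans hy.2.1
      _ ≤ _ := by
            apply eVariationOn.mono
            refine Set.union_subset (Set.inter_subset_inter_right s ?_)
              (Set.inter_subset_inter_right s ?_)
            · exact Set.Icc_subset_Icc_right (hu (Nat.le_succ n))
            · exact Set.Icc_subset_Icc_left (hu (Nat.zero_le n))


lemma crux {S : Type*} [MetricSpace S] {A : Set S} {a b : ℝ} {P : ℝ → S}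
    (hP : ContinuousOn P (Set.Icc a b)) (hadm : (Set.Icc a b ∩ P ⁻¹' A).Countable)
    {ι : Type*} [Countable ι] {I : ι → Set ℝ}
    (hopen : ∀ i, ∃ U : Set ℝ, IsOpen U ∧ I i = U ∩ Set.Icc a b)
    (hcover : (⋃ i, I i) = Set.Icc a b \ P ⁻¹' A)
    {x y : ℝ} (hx : x ∈ Set.Icc a b) (hy : y ∈ Set.Icc a b) (hxy : x ≤ y) :
    edist (P x) (P y) ≤ ∑' i, eVariationOn P (I i ∩ Set.Icc x y) := by
  classical
  set R : ℝ → ℝ≥0∞ := fun t => ∑' i, eVariationOn P (I i ∩ Set.Icc x t) with hR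
  have hRmono : ∀ ⦃s t : ℝ⦄, s ≤ t → R s ≤ R t := fun s t hst =>
    ENNReal.tsum_le_tsum fun i => eVariationOn.mono P
      (Set.inter_subset_inter_right _ (Set.Icc_subset_Icc_right hst))
  suffices H : ∀ ε : ℝ≥0∞, ε ≠ 0 → edist (P x) (P y) ≤ R y + ε by
    apply ENNReal.le_of_forall_pos_le_add
    intro ε hε _
    exact H ε (by exact_mod_cast hε.ne')
  intro ε hε
  set B := Set.Icc a b ∩ P ⁻¹' A with hB
  haveI : Countable B := hadm.to_subtype
  obtain ⟨δ, δpos, hδsum⟩ := ENNReal.exists_pos_sum_of_countable' hε B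
  set w : ℝ → ℝ≥0∞ := fun t => ∑' s : B, if (s : ℝ) < t then δ s else 0 with hw
  have hwmono : ∀ ⦃s t : ℝ⦄, s ≤ t → w s ≤ w t := by
    intro s t hst
    refine ENNReal.tsum_le_tsum fun p => ?_
    by_cases h : (p : ℝ) < s
    · simp [h, h.trans_le hst]
    · simp [h]
  have hwle : ∀ t, w t ≤ ε := by
    intro t
    refine le_trans (ENNReal.tsum_le_tsum fun p => ?_) hδsum.le
    split <;> simp
  set T : Set ℝ := {t | t ∈ Set.Icc x y ∧ edist (P x) (P t) ≤ R t + w t} with hT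
  have hxT : x ∈ T := ⟨⟨le_refl x, hxy⟩, by simp⟩
  have hTsub : T ⊆ Set.Icc x y := fun t ht => ht.1
  have hTne : T.Nonempty := ⟨x, hxT⟩
  have hTbdd : BddAbove T := bddAbove_Icc.mono hTsub
  set c := sSup T with hc
  have hcx : x ≤ c := le_csSup hTbdd hxT
  have hcy : c ≤ y := csSup_le hTne fun t ht => ht.1.2
  have hcab : c ∈ Set.Icc a b := ⟨hx.1.trans hcx, hcy.trans hy.2⟩
  have hcT : edist (P x) (P c) ≤ R c + w c := by
    obtain ⟨t, htmono, htlim, htT⟩ := exists_seq_tendsto_sSup hTne hTbdd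
    have htab : ∀ n, t n ∈ Set.Icc a b := fun n =>
      ⟨hx.1.trans (hTsub (htT n)).1, (hTsub (htT n)).2.trans hy.2⟩
    have hPt : Tendsto (fun n => P (t n)) atTop (𝓝 (P c)) := by
      have h1 : Tendsto t atTop (𝓝[Set.Icc a b] c) :=
        tendsto_nhdsWithin_of_tendsto_nhds_of_eventually_within t htlim
          (Filter.Eventually.of_forall htab)
      exact ((hP c hcab).tendsto).comp h1
    have hedist : Tendsto (fun n => edist (P (t n)) (P c)) atTop (𝓝 0) := by
      have := hPt.edist (tendsto_const_nhds (x := P c))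
      simpa using this
    apply ENNReal.le_of_forall_pos_le_add
    intro η hη _
    have hev : ∀ᶠ n in atTop, edist (P (t n)) (P c) < η :=
      hedist.eventually_lt_const (by exact_mod_cast hη)
    obtain ⟨n, hn⟩ := hev.exists
    calc edist (P x) (P c) ≤ edist (P x) (P (t n)) + edist (P (t n)) (P c) :=
          edist_triangle _ _ _
      _ ≤ (R (t n) + w (t n)) + η := add_le_add (htT n).2 hn.le
      _ ≤ (R c + w c) + η := add_le_add_left
          (add_le_add (hRmono (le_csSup hTbdd (htT n))) (hwmono (le_csSup hTbdd (htT n)))) _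
  have hcyeq : c = y := by
    by_contra hne'
    have hclty : c < y := lt_of_le_of_ne hcy hne'
    by_cases hPA : P c ∈ A
    · have cB : c ∈ B := ⟨hcab, hPA⟩
      have hdpos : (0 : ℝ≥0∞) < δ ⟨c, cB⟩ := δpos _
      have hev : ∀ᶠ s in 𝓝[Set.Icc a b] c, edist (P s) (P c) < δ ⟨c, cB⟩ := by
        have h0 : Tendsto (fun s => edist (P s) (P c)) (𝓝[Set.Icc a b] c) (𝓝 0) := by
          have := (hP c hcab).tendsto.edist (tendsto_const_nhds (x := P c))
          simpa using this
        exact h0.eventually_lt_const hdpos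
      have hsub : Set.Ioc c y ⊆ Set.Icc a b := fun s hs =>
        ⟨hcab.1.trans hs.1.le, hs.2.trans hy.2⟩
      have hev2 : ∀ᶠ s in 𝓝[Set.Ioc c y] c, edist (P s) (P c) < δ ⟨c, cB⟩ :=
        hev.filter_mono (nhdsWithin_mono c hsub)
      haveI : (𝓝[Set.Ioc c y] c).NeBot := by
        rw [nhdsWithin_Ioc_eq_nhdsGT hclty]
        infer_instance
      obtain ⟨t, htd, htmem⟩ := (hev2.and self_mem_nhdsWithin).exists
      have htT : t ∈ T := by
        refine ⟨⟨hcx.trans htmem.1.le, htmem.2⟩, ?_⟩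
        have hwt : w c + δ ⟨c, cB⟩ ≤ w t := by
          have hpt : ∀ p : B, (if (p : ℝ) < c then δ p else 0)
              + (if p = (⟨c, cB⟩ : B) then δ ⟨c, cB⟩ else 0)
              ≤ (if (p : ℝ) < t then δ p else 0) := by
            intro p
            by_cases h1 : (p : ℝ) < c
            · have hpc : p ≠ (⟨c, cB⟩ : B) := by
                intro h; rw [h] at h1; exact lt_irrefl _ h1
              simp [h1, hpc, h1.trans htmem.1]
            · by_cases h2 : p = (⟨c, cB⟩ : B)
              · have : (p : ℝ) = c := by rw [h2]
                simp [h1, h2, this, htmem.1]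
              · simp [h1, h2]
          calc w c + δ ⟨c, cB⟩
              = ∑' p : B, ((if (p : ℝ) < c then δ p else 0)
                + (if p = (⟨c, cB⟩ : B) then δ ⟨c, cB⟩ else 0)) := by
                rw [ENNReal.tsum_add, tsum_ite_eq]
            _ ≤ w t := ENNReal.tsum_le_tsum hpt
        calc edist (P x) (P t) ≤ edist (P x) (P c) + edist (P c) (P t) := edist_triangle _ _ _
          _ ≤ (R c + w c) + δ ⟨c, cB⟩ := add_le_add hcT (by rw [edist_comm]; exact htd.le)
          _ = R c + (w c + δ ⟨c, cB⟩) := by rw [add_assoc]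
          _ ≤ R t + w t := add_le_add (hRmono htmem.1.le) hwt
      exact absurd (le_csSup hTbdd htT) (not_le.mpr htmem.1)
    · have hcG : c ∈ ⋃ i, I i := by
        rw [hcover]; exact ⟨hcab, hPA⟩
      obtain ⟨i₀, hci₀⟩ := Set.mem_iUnion.mp hcG
      obtain ⟨U, hU, hIU⟩ := hopen i₀
      have hcU : c ∈ U := by rw [hIU] at hci₀; exact hci₀.1
      obtain ⟨η, hηpos, hball⟩ := Metric.isOpen_iff.mp hU c hcU
      set t := min (c + η / 2) y with ht
      have hct : c < t := lt_min (by linarith) hclty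
      have hty : t ≤ y := min_le_right _ _
      have htab : t ∈ Set.Icc a b := ⟨hcab.1.trans hct.le, hty.trans hy.2⟩
      have htI : t ∈ I i₀ := by
        rw [hIU]
        refine ⟨hball ?_, htab⟩
        rw [Metric.mem_ball, Real.dist_eq, abs_of_nonneg (by linarith [hct.le] : (0:ℝ) ≤ t - c)]
        have h5 : t ≤ c + η / 2 := min_le_left _ _
        linarith
      have key : eVariationOn P (I i₀ ∩ Set.Icc x c) + edist (P c) (P t)
          ≤ eVariationOn P (I i₀ ∩ Set.Icc x t) := by
        have h1 : IsGreatest (I i₀ ∩ Set.Icc x c) c := ⟨⟨hci₀, hcx, le_refl c⟩, fun z hz => hz.2.2⟩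
        have h2 : IsLeast ({c, t} : Set ℝ) c :=
          ⟨Or.inl rfl, by rintro z (rfl | rfl); exacts [le_refl _, hct.le]⟩
        have h3 : edist (P c) (P t) ≤ eVariationOn P ({c, t} : Set ℝ) :=
          eVariationOn.edist_le P (Or.inl rfl) (Or.inr rfl)
        calc eVariationOn P (I i₀ ∩ Set.Icc x c) + edist (P c) (P t)
            ≤ eVariationOn P (I i₀ ∩ Set.Icc x c) + eVariationOn P ({c, t} : Set ℝ) :=
              add_le_add_right h3 _
          _ = eVariationOn P ((I i₀ ∩ Set.Icc x c) ∪ {c, t}) := (eVariationOn.union P h1 h2).symm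
          _ ≤ eVariationOn P (I i₀ ∩ Set.Icc x t) := by
              apply eVariationOn.mono
              refine Set.union_subset
                (Set.inter_subset_inter_right _ (Set.Icc_subset_Icc_right hct.le)) ?_
              rintro z (rfl | rfl)
              exacts [⟨hci₀, hcx, hct.le⟩, ⟨htI, hcx.trans hct.le, le_refl _⟩]
      have hRt : R c + edist (P c) (P t) ≤ R t := by
        have hpt : ∀ i, eVariationOn P (I i ∩ Set.Icc x c)
            + (if i = i₀ then edist (P c) (P t) else 0)
            ≤ eVariationOn P (I i ∩ Set.Icc x t) := by
          intro i
          by_cases h : i = i₀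
          · subst h; simpa using key
          · simp only [h, if_false, add_zero]
            exact eVariationOn.mono P
              (Set.inter_subset_inter_right _ (Set.Icc_subset_Icc_right hct.le))
        calc R c + edist (P c) (P t)
            = ∑' i, (eVariationOn P (I i ∩ Set.Icc x c)
              + if i = i₀ then edist (P c) (P t) else 0) := by
              rw [ENNReal.tsum_add, tsum_ite_eq]
          _ ≤ R t := ENNReal.tsum_le_tsum hpt
      have htT : t ∈ T := by
        refine ⟨⟨hcx.trans hct.le, hty⟩, ?_⟩
        calc edist (P x) (P t) ≤ edist (P x) (P c) + edist (P c) (P t) := edist_triangle _ _ _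
          _ ≤ (R c + w c) + edist (P c) (P t) := add_le_add_left hcT _
          _ = (R c + edist (P c) (P t)) + w c := by rw [add_assoc, add_assoc, add_comm (w c)]
          _ ≤ R t + w t := add_le_add hRt (hwmono hct.le)
      exact absurd (le_csSup hTbdd htT) (not_le.mpr hct)
  rw [hcyeq] at hcT
  calc edist (P x) (P y) ≤ R y + w y := hcT
    _ ≤ R y + ε := add_le_add_right (hwle y) _


/-- The length of an admissible path decomposes over excursions:
if `P : [a,b] → S` is continuous with `P⁻¹(A)` countable (`A` closed), and the open set
`P⁻¹(S∖A)` is written as a countable union of disjoint intervals `I i` (each open in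
`[a,b]`), then each restriction `P|_{cl(I i)}` is admissible and
`L(P) = ∑ᵢ L(P|_{cl(I i)})`, where `cl(I i) = [inf (I i), sup (I i)]`. -/
theorem admissibleLength_decomposes {S : Type*} [MetricSpace S] (A : Set S)
    (hA : IsClosed A) (a b : ℝ) (hab : a ≤ b) (P : ℝ → S)
    (hP : ContinuousOn P (Set.Icc a b))
    (hadm : (Set.Icc a b ∩ P ⁻¹' A).Countable)
    {ι : Type*} [Countable ι] (I : ι → Set ℝ)
    (hne : ∀ i, (I i).Nonempty)
    (hconn : ∀ i, (I i).OrdConnected)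
    (hopen : ∀ i, ∃ U : Set ℝ, IsOpen U ∧ I i = U ∩ Set.Icc a b)
    (hdisj : Pairwise (Function.onFun Disjoint I))
    (hcover : (⋃ i, I i) = Set.Icc a b \ P ⁻¹' A) :
    (∀ i, (Set.Icc (sInf (I i)) (sSup (I i)) ∩ P ⁻¹' A).Countable) ∧
    admissibleLength A P a b = ∑' i, admissibleLength A P (sInf (I i)) (sSup (I i)) := by
  classical
  have hIab : ∀ i, I i ⊆ Set.Icc a b := by
    intro i x hx
    have hx2 : x ∈ ⋃ i, I i := Set.mem_iUnion.mpr ⟨i, hx⟩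
    rw [hcover] at hx2; exact hx2.1
  have hInf_ge : ∀ i, a ≤ sInf (I i) := fun i => le_csInf (hne i) fun x hx => (hIab i hx).1
  have hSup_le : ∀ i, sSup (I i) ≤ b := fun i => csSup_le (hne i) fun x hx => (hIab i hx).2
  have hbddA : ∀ i, BddAbove (I i) := fun i => bddAbove_Icc.mono (hIab i)
  have hbddB : ∀ i, BddBelow (I i) := fun i => bddBelow_Icc.mono (hIab i)
  have hIccsub : ∀ i, Set.Icc (sInf (I i)) (sSup (I i)) ⊆ Set.Icc a b := fun i z hz =>
    ⟨(hInf_ge i).trans hz.1, hz.2.trans (hSup_le i)⟩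
  refine ⟨fun i => hadm.mono (Set.inter_subset_inter_left _ (hIccsub i)), ?_⟩
  have hgood : ∀ i, ∀ x ∈ I i, P x ∉ A := by
    intro i x hx
    have hx2 : x ∈ ⋃ i, I i := Set.mem_iUnion.mpr ⟨i, hx⟩
    rw [hcover] at hx2; exact hx2.2
  rcases hab.eq_or_lt with rfl | hab'
  · -- degenerate case a = b
    have hzero : admissibleLength A P a a = 0 := by
      apply le_antisymm _ zero_le
      apply sSup_le
      rintro r ⟨n, u, hu, hmem, hA', rfl⟩
      have hueq : ∀ j, u j = a := fun j => le_antisymm (hmem j).2 (hmem j).1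
      have : ∀ j : Fin n, ENNReal.ofReal (dist (P (u j.castSucc)) (P (u j.succ))) = 0 := by
        intro j; rw [hueq j.castSucc, hueq j.succ]; simp
      rw [Finset.sum_congr rfl fun j _ => this j]
      simp
    have hIa : ∀ i, I i = {a} := by
      intro i
      have h1 := hIab i
      rw [Set.Icc_self] at h1
      rcases Set.subset_singleton_iff_eq.mp h1 with h | h
      · exact absurd h (Set.nonempty_iff_ne_empty.mp (hne i))
      · exact h
    have hterm : ∀ i, admissibleLength A P (sInf (I i)) (sSup (I i)) = 0 := by
      intro i
      rw [hIa i, csInf_singleton, csSup_singleton, hzero]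
    rw [hzero, tsum_congr hterm, tsum_zero]
  · -- main case a < b
    have htot : ∀ i j, i ≠ j → (∀ x ∈ I i, ∀ y ∈ I j, x ≤ y) ∨ (∀ x ∈ I j, ∀ y ∈ I i, x ≤ y) :=
      fun i j hij => ordConnected_disjoint_total (hconn i) (hconn j) (hdisj hij) (hne i) (hne j)
    -- nondegeneracy
    have hlt : ∀ i, sInf (I i) < sSup (I i) := by
      intro i
      obtain ⟨x, hx⟩ := hne i
      obtain ⟨U, hU, hIU⟩ := hopen i
      have hxU : x ∈ U := by rw [hIU] at hx; exact hx.1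
      obtain ⟨η, hηpos, hball⟩ := Metric.isOpen_iff.mp hU x hxU
      have hxab : x ∈ Set.Icc a b := hIab i (by rw [hIU]; exact ⟨hxU, by rw [hIU] at hx; exact hx.2⟩)
      by_cases hxb : x < b
      · set y := min (x + η / 2) b with hy
        have hxy : x < y := lt_min (by linarith) hxb
        have hyI : y ∈ I i := by
          rw [hIU]
          refine ⟨hball ?_, ⟨hxab.1.trans hxy.le, min_le_right _ _⟩⟩
          rw [Metric.mem_ball, Real.dist_eq, abs_of_nonneg (by linarith : (0:ℝ) ≤ y - x)]
          have : y ≤ x + η / 2 := min_le_left _ _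
          linarith
        calc sInf (I i) ≤ x := csInf_le (hbddB i) (by rw [hIU]; exact ⟨hxU, hxab⟩)
          _ < y := hxy
          _ ≤ sSup (I i) := le_csSup (hbddA i) hyI
      · have hxb' : x = b := le_antisymm hxab.2 (not_lt.mp hxb)
        set y := max (x - η / 2) a with hy
        have hyx : y < x := max_lt (by linarith) (by rw [hxb']; exact hab')
        have hyI : y ∈ I i := by
          rw [hIU]
          refine ⟨hball ?_, ⟨le_max_right _ _, hyx.le.trans hxab.2⟩⟩
          rw [Metric.mem_ball, Real.dist_eq, abs_of_nonpos (by linarith : y - x ≤ 0)]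
          have : x - η / 2 ≤ y := le_max_left _ _
          linarith
        calc sInf (I i) ≤ y := csInf_le (hbddB i) hyI
          _ < x := hyx
          _ ≤ sSup (I i) := le_csSup (hbddA i) (by rw [hIU]; exact ⟨hxU, hxab⟩)
    have hIoo : ∀ i, Set.Ioo (sInf (I i)) (sSup (I i)) ⊆ I i := by
      intro i z hz
      obtain ⟨p, hp, hpz⟩ := exists_lt_of_csInf_lt (hne i) hz.1
      obtain ⟨q, hq, hzq⟩ := exists_lt_of_lt_csSup (hne i) hz.2
      exact (hconn i).out hp hq ⟨hpz.le, hzq.le⟩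
    -- the closed hull meets the good set exactly in I i
    have hhull : ∀ i, Set.Icc (sInf (I i)) (sSup (I i)) ∩ {x | P x ∉ A} = I i := by
      intro i
      ext z
      constructor
      · rintro ⟨hzIcc, hzA⟩
        have hzab : z ∈ Set.Icc a b := hIccsub i hzIcc
        have hzG : z ∈ ⋃ j, I j := by rw [hcover]; exact ⟨hzab, hzA⟩
        obtain ⟨j, hzj⟩ := Set.mem_iUnion.mp hzG
        by_cases hji : j = i
        · exact hji ▸ hzj
        exfalso
        obtain ⟨U, hU, hIU⟩ := hopen j
        have hzU : z ∈ U := by rw [hIU] at hzj; exact hzj.1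
        obtain ⟨η, hηpos, hball⟩ := Metric.isOpen_iff.mp hU z hzU
        rcases htot j i hji with hle | hle
        · -- I j is left of I i, so z = sInf (I i)
          have hz_eq : z = sInf (I i) :=
            le_antisymm (le_csInf (hne i) fun y hy => hle z hzj y hy) hzIcc.1
          set m := min (z + η) (sSup (I i)) with hm
          have hzm : z < m := lt_min (by linarith) (hz_eq ▸ hlt i)
          set w := (z + m) / 2 with hw
          have hzw : z < w := by rw [hw]; linarith
          have hwm : w < m := by rw [hw]; linarith
          have hwIi : w ∈ I i := hIoo i ⟨hz_eq ▸ hzw, hwm.trans_le (min_le_right _ _)⟩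
          have hwIj : w ∈ I j := by
            rw [hIU]
            refine ⟨hball ?_, hIab i hwIi⟩
            rw [Metric.mem_ball, Real.dist_eq, abs_of_nonneg (by linarith : (0:ℝ) ≤ w - z)]
            have : m ≤ z + η := min_le_left _ _
            linarith
          exact Set.disjoint_left.mp (hdisj hji) hwIj hwIi
        · -- I i is left of I j, so z = sSup (I i)
          have hz_eq : z = sSup (I i) :=
            le_antisymm hzIcc.2 (csSup_le (hne i) fun y hy => hle y hy z hzj)
          set m := max (z - η) (sInf (I i)) with hm
          have hmz : m < z := max_lt (by linarith) (hz_eq ▸ hlt i)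
          set w := (z + m) / 2 with hw
          have hwz : w < z := by rw [hw]; linarith
          have hmw : m < w := by rw [hw]; linarith
          have hwIi : w ∈ I i := hIoo i ⟨(le_max_right _ _).trans_lt hmw, hz_eq ▸ hwz⟩
          have hwIj : w ∈ I j := by
            rw [hIU]
            refine ⟨hball ?_, hIab i hwIi⟩
            rw [Metric.mem_ball, Real.dist_eq, abs_of_nonpos (by linarith : w - z ≤ 0)]
            have : z - η ≤ m := le_max_left _ _
            linarith
          exact Set.disjoint_left.mp (hdisj hji) hwIj hwIi
      · intro hz
        exact ⟨⟨csInf_le (hbddB i) hz, le_csSup (hbddA i) hz⟩, hgood i z hz⟩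
    have hGL : admissibleLength A P a b = eVariationOn P (⋃ i, I i) := by
      rw [admissibleLength_eq, hcover, Set.diff_eq]
      rfl
    have hiL : ∀ i, admissibleLength A P (sInf (I i)) (sSup (I i)) = eVariationOn P (I i) :=
      fun i => by rw [admissibleLength_eq, hhull i]
    rw [hGL, tsum_congr hiL]
    apply le_antisymm
    · -- subadditivity, using the crux lemma
      have main : ∀ (m : ℕ) (u : ℕ → ℝ), Monotone u → (∀ k, u k ∈ ⋃ i, I i) →
          ∑ k ∈ Finset.range m, edist (P (u (k + 1))) (P (u k))
            ≤ ∑' i, eVariationOn P (I i) := by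
        intro m u hu hus
        have husab : ∀ k, u k ∈ Set.Icc a b := by
          intro k
          have := hus k
          rw [hcover] at this
          exact this.1
        have key : ∀ k, edist (P (u k)) (P (u (k + 1)))
            ≤ ∑' i, eVariationOn P (I i ∩ Set.Icc (u k) (u (k + 1))) := fun k =>
          crux hP hadm hopen hcover (husab k) (husab (k + 1)) (hu (Nat.le_succ k))
        calc ∑ k ∈ Finset.range m, edist (P (u (k + 1))) (P (u k))
            = ∑ k ∈ Finset.range m, edist (P (u k)) (P (u (k + 1))) := by
              exact Finset.sum_congr rfl fun k _ => edist_comm _ _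
          _ ≤ ∑ k ∈ Finset.range m, ∑' i, eVariationOn P (I i ∩ Set.Icc (u k) (u (k + 1))) :=
              Finset.sum_le_sum fun k _ => key k
          _ = ∑' i, ∑ k ∈ Finset.range m, eVariationOn P (I i ∩ Set.Icc (u k) (u (k + 1))) :=
              (Summable.tsum_finsetSum fun k _ => ENNReal.summable).symm
          _ ≤ ∑' i, eVariationOn P (I i) := ENNReal.tsum_le_tsum fun i =>
              (sum_icc_eVar_le P (I i) u hu m).trans
                (eVariationOn.mono P Set.inter_subset_left)
      unfold eVariationOn
      exact iSup_le fun p => main p.1 p.2.1 p.2.2.1 p.2.2.2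
    · rw [ENNReal.tsum_eq_iSup_sum]
      apply iSup_le
      intro F
      exact (sum_eVar_le P hne htot F).trans
        (eVariationOn.mono P (Set.iUnion₂_subset fun i _ => Set.subset_iUnion I i))
end

section
/- A metric that agrees with a length metric on interior points equals the excursion-infimum extension: let (H, d) be a length metric space, H̄ ⊇ H, and define for z, w ∈ H̄ the quantity d̂(z,w) as the infimum of lengths (computed via suprema of sums of d-distances over subdivision points lying in H) over admissible paths from z to w in H̄. Then for z, w ∈ H, d̂(z,w) = d(z,w). -/
open Set ENNReal

/-- The length of (the restriction to `[s,t]` of) a path `P` in `H̄`, computed as the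
supremum over finite subdivisions whose points are mapped into `H` of the sums of
consecutive `d`-distances. -/
noncomputable def subdivLength {X : Type*} (H : Set X) (d : X → X → ℝ) (P : ℝ → X)
    (s t : ℝ) : ℝ≥0∞ :=
  sSup { r : ℝ≥0∞ | ∃ (n : ℕ) (u : Fin (n + 1) → ℝ), Monotone u ∧
    (∀ j, u j ∈ Set.Icc s t) ∧ (∀ j, P (u j) ∈ H) ∧
    r = ∑ j : Fin n, ENNReal.ofReal (d (P (u j.castSucc)) (P (u j.succ))) }

/-- The excursion-infimum extension `d̂`: the infimum of lengths over admissible paths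
(continuous paths whose preimage of `H̄ ∖ H` is countable) between two points of `H̄`. -/
noncomputable def excursionInfDist {X : Type*} [TopologicalSpace X]
    (H : Set X) (d : X → X → ℝ) (z w : X) : ℝ≥0∞ :=
  sInf { r : ℝ≥0∞ | ∃ (P : ℝ → X) (a b : ℝ), a ≤ b ∧ ContinuousOn P (Set.Icc a b) ∧
    P a = z ∧ P b = w ∧ (Set.Icc a b ∩ P ⁻¹' Hᶜ).Countable ∧
    r = subdivLength H d P a b }

theorem ofReal_le_subdivLength {X : Type*} {H : Set X} {d : X → X → ℝ} {P : ℝ → X}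
    {a b : ℝ} (hab : a ≤ b) (ha : P a ∈ H) (hb : P b ∈ H) :
    ENNReal.ofReal (d (P a) (P b)) ≤ subdivLength H d P a b := by
  refine le_sSup ⟨1, ![a, b], ?_, ?_, ?_, by simp⟩
  · exact Fin.monotone_iff_le_succ.2 fun i => by fin_cases i; simpa using hab
  · intro j; fin_cases j <;> simp [hab]
  · intro j; fin_cases j <;> simpa

theorem ofReal_le_excursionInfDist {X : Type*} [TopologicalSpace X] {H : Set X}
    {d : X → X → ℝ} {z w : X} (hz : z ∈ H) (hw : w ∈ H) :
    ENNReal.ofReal (d z w) ≤ excursionInfDist H d z w := by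
  refine le_sInf ?_
  rintro r ⟨P, a, b, hab, -, rfl, rfl, -, rfl⟩
  exact ofReal_le_subdivLength hab hz hw

theorem excursionInfDist_le_subdivLength_of_mapsTo {X : Type*} [TopologicalSpace X]
    {H : Set X} {d : X → X → ℝ} {P : ℝ → X} {a b : ℝ} (hab : a ≤ b)
    (hP : ContinuousOn P (Icc a b)) (hPH : MapsTo P (Icc a b) H) :
    excursionInfDist H d (P a) (P b) ≤ subdivLength H d P a b :=
  sInf_le ⟨P, a, b, hab, hP, rfl, rfl,
    countable_empty.mono fun _ ⟨ht, hPt⟩ => hPt (hPH ht), rfl⟩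

theorem excursionInfDist_eq_of_lengthMetric_general {X : Type*} [TopologicalSpace X]
    (H : Set X) (d : X → X → ℝ)
    (hlength : ∀ z ∈ H, ∀ w ∈ H,
      ENNReal.ofReal (d z w) =
        sInf { r : ℝ≥0∞ | ∃ (P : ℝ → X) (a b : ℝ), a ≤ b ∧
          ContinuousOn P (Set.Icc a b) ∧ Set.MapsTo P (Set.Icc a b) H ∧
          P a = z ∧ P b = w ∧ r = subdivLength H d P a b }) :
    ∀ z ∈ H, ∀ w ∈ H, excursionInfDist H d z w = ENNReal.ofReal (d z w) := by
  intro z hz w hw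
  refine le_antisymm ?_ (ofReal_le_excursionInfDist hz hw)
  rw [hlength z hz w hw]
  refine le_sInf ?_
  rintro r ⟨P, a, b, hab, hP, hPH, rfl, rfl, rfl⟩
  exact excursionInfDist_le_subdivLength_of_mapsTo hab hP hPH

/-- A metric that agrees with a length metric on interior points equals
the excursion-infimum extension: if `d` is a length metric on `H` (i.e. `d(z,w)` equals
the infimum of `d`-lengths of continuous paths in `H` from `z` to `w`), then for
`z, w ∈ H` the excursion-infimum extension `d̂` satisfies `d̂(z,w) = d(z,w)`. -/
theorem excursionInfDist_eq_of_lengthMetric {X : Type*} [TopologicalSpace X]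
    (H : Set X) (d : X → X → ℝ)
    (hdsymm : ∀ z ∈ H, ∀ w ∈ H, d z w = d w z)
    (hdtri : ∀ z ∈ H, ∀ w ∈ H, ∀ x ∈ H, d z x ≤ d z w + d w x)
    (hdpos : ∀ z ∈ H, ∀ w ∈ H, (d z w = 0 ↔ z = w))
    (hdnonneg : ∀ z ∈ H, ∀ w ∈ H, 0 ≤ d z w)
    (hlength : ∀ z ∈ H, ∀ w ∈ H,
      ENNReal.ofReal (d z w) =
        sInf { r : ℝ≥0∞ | ∃ (P : ℝ → X) (a b : ℝ), a ≤ b ∧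
          ContinuousOn P (Set.Icc a b) ∧ Set.MapsTo P (Set.Icc a b) H ∧
          P a = z ∧ P b = w ∧ r = subdivLength H d P a b }) :
    ∀ z ∈ H, ∀ w ∈ H, excursionInfDist H d z w = ENNReal.ofReal (d z w) :=
  excursionInfDist_eq_of_lengthMetric_general H d hlength
end
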